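/- arXiv:1302.1808 — 4 statements merged into one kernel-verified Lean document; each statement's English description precedes it below -/
import Mathlib

section
/- Fix an integer k ≥ 3, α ∈ (0,1), ε > 0, and set K = (4+ε)·(k!)²/α^{k−1} and p_n = (K·log n / n^{k−1})^{1/k}. Then for every integer l with 1 ≤ l ≤ k−1 and every δ > 0 there is a constant C such that for all n and all integers i with 1 ≤ i ≤ (k−α)·n, the probability that there exist 3k pairwise disjoint l-element subsets of 𝒜 each summing to i is at most C·n^{−3+δ}; i.e., P(Y*_{l,n}(i) ≥ 3k) ≤ C·n^{−3+δ}. -/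
open MeasureTheory Filter
open scoped ENNReal

/-- Bernoulli PMF on `Bool` with success probability `p` (clamped to `[0,1]`). -/
noncomputable def bern (p : ℝ) : PMF Bool :=
  PMF.bernoulli (min (Real.toNNReal p) 1) (min_le_right _ _)

/-- The product Bernoulli measure on subsets of `{0, …, n}` (encoded as indicator
functions `Fin (n+1) → Bool`): each element is included independently w.p. `p`. -/
noncomputable def randSet (n : ℕ) (p : ℝ) : Measure (Fin (n + 1) → Bool) :=
  Measure.pi fun _ => (bern p).toMeasure

/-- The `k`-element subsets of the random set `ω` whose elements sum to `j`. -/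
def repFinsets (n k j : ℕ) (ω : Fin (n + 1) → Bool) : Finset (Finset (Fin (n + 1))) :=
  Finset.univ.filter fun S => S.card = k ∧ (∑ i ∈ S, (i : ℕ)) = j ∧ ∀ i ∈ S, ω i = true

/-- `Y n k j ω` : the number of `k`-element subsets of the random set `ω` summing to `j`. -/
def Y (n k j : ℕ) (ω : Fin (n + 1) → Bool) : ℕ := (repFinsets n k j ω).card

open scoped Classical in
/-- `Ystar n k j ω` : the maximum size of a collection of pairwise disjoint `k`-element
subsets of the random set `ω`, each of whose elements sum to `j`. -/
noncomputable def Ystar (n k j : ℕ) (ω : Fin (n + 1) → Bool) : ℕ :=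
  (Finset.univ.filter fun 𝒞 : Finset (Finset (Fin (n + 1))) =>
    (∀ S ∈ 𝒞, S ∈ repFinsets n k j ω) ∧
      (𝒞 : Set (Finset (Fin (n + 1)))).Pairwise fun S T => Disjoint S T).sup Finset.card

lemma cyl_measure (n : ℕ) (p : ℝ) (U : Finset (Fin (n+1))) :
    randSet n p {ω | ∀ j ∈ U, ω j = true} = (min (ENNReal.ofReal p) 1) ^ U.card := by
  classical
  have hset : {ω : Fin (n+1) → Bool | ∀ j ∈ U, ω j = true}
      = Set.pi Set.univ (fun j => if j ∈ U then ({true} : Set Bool) else Set.univ) := by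
    ext ω
    simp only [Set.mem_setOf_eq, Set.mem_pi, Set.mem_univ, forall_true_left]
    constructor
    · intro h j; split <;> simp_all
    · intro h j hj; have := h j; simp only [hj, if_true, Set.mem_singleton_iff] at this
      exact this
  rw [hset, randSet, Measure.pi_pi]
  have hone : ∀ j : Fin (n+1), (bern p).toMeasure (if j ∈ U then ({true} : Set Bool) else Set.univ)
      = if j ∈ U then (min (ENNReal.ofReal p) 1) else 1 := by
    intro j
    split
    · rw [PMF.toMeasure_apply_singleton _ _ (measurableSet_singleton _)]
      simp [bern, PMF.bernoulli_apply, ENNReal.ofReal]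
    · exact measure_univ
  simp_rw [hone]
  rw [Finset.prod_ite_mem, Finset.univ_inter, Finset.prod_const]

lemma reps_card_le (n l i : ℕ) (hl : 1 ≤ l) :
    (Finset.univ.filter fun S : Finset (Fin (n+1)) =>
        S.card = l ∧ (∑ j ∈ S, (j:ℕ)) = i).card ≤ (n+1)^(l-1) := by
  classical
  set R := Finset.univ.filter fun S : Finset (Fin (n+1)) =>
        S.card = l ∧ (∑ j ∈ S, (j:ℕ)) = i with hR
  have hmem : ∀ S ∈ R, S.card = l ∧ (∑ j ∈ S, (j:ℕ)) = i := by
    intro S hS; simpa [hR] using (Finset.mem_filter.mp hS).2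
  set f : Finset (Fin (n+1)) → Finset (Fin (n+1)) :=
    fun S => if h : S.Nonempty then S.erase (S.max' h) else ∅ with hf
  have hne : ∀ S ∈ R, S.Nonempty := by
    intro S hS; exact Finset.card_pos.mp (by rw [(hmem S hS).1]; omega)
  have hins : ∀ S (h : S ∈ R), S = insert (S.max' (hne S h)) (f S) := by
    intro S h
    simp only [hf, dif_pos (hne S h)]
    rw [Finset.insert_erase (Finset.max'_mem _ _)]
  have hsum : ∀ S (h : S ∈ R), ((S.max' (hne S h) : ℕ)) + (∑ j ∈ f S, (j:ℕ)) = i := by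
    intro S h
    rw [← (hmem S h).2]
    simp only [hf, dif_pos (hne S h)]
    exact Finset.add_sum_erase _ _ (Finset.max'_mem _ _)
  have hcard : R.card ≤ (Finset.powersetCard (l-1) (Finset.univ : Finset (Fin (n+1)))).card := by
    apply Finset.card_le_card_of_injOn f
    · intro S hS
      rw [Finset.mem_coe, Finset.mem_powersetCard]
      refine ⟨Finset.subset_univ _, ?_⟩
      simp only [hf, dif_pos (hne S hS)]
      rw [Finset.card_erase_of_mem (Finset.max'_mem _ _), (hmem S hS).1]
    · intro S hS T hT hfe
      have h1 := hsum S hS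
      have h2 := hsum T hT
      rw [hfe] at h1
      have hmax : (S.max' (hne S hS) : ℕ) = (T.max' (hne T hT) : ℕ) := by omega
      have hmax' : S.max' (hne S hS) = T.max' (hne T hT) := Fin.ext hmax
      rw [hins S hS, hins T hT, hfe, hmax']
  calc R.card ≤ _ := hcard
    _ = (n+1).choose (l-1) := by
        rw [Finset.card_powersetCard, Finset.card_univ, Fintype.card_fin]
    _ ≤ (n+1)^(l-1) := Nat.choose_le_pow _ _


lemma real_bound (k l : ℕ) (hk : 3 ≤ k) (hl1 : 1 ≤ l) (hl2 : l ≤ k - 1)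
    (K δ : ℝ) (hK : 0 < K) (hδ : 0 < δ) :
    ∃ C : ℝ, ∀ n : ℕ, 1 ≤ n →
      (((n+1)^((l-1)*(3*k)) : ℕ) : ℝ) *
          ((K * Real.log n / (n:ℝ)^(k-1)) ^ ((1:ℝ)/k)) ^ (3*k*l)
        ≤ C * (n:ℝ) ^ (-3+δ) := by
  set δ' : ℝ := δ / (3*l) with hδ'
  have hl0 : (0:ℝ) < 3*l := by positivity
  have hδ'0 : 0 < δ' := by positivity
  refine ⟨2^((l-1)*(3*k)) * K^(3*l) * (1/δ')^(3*l), ?_⟩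
  intro n hn
  have hr : (1:ℝ) ≤ (n:ℝ) := by exact_mod_cast hn
  set r : ℝ := (n:ℝ) with hrdef
  have hr0 : (0:ℝ) < r := lt_of_lt_of_le one_pos hr
  have hlog : 0 ≤ Real.log r := Real.log_nonneg hr
  have hx : 0 ≤ K * Real.log r / r^(k-1) :=
    div_nonneg (mul_nonneg hK.le hlog) (by positivity)
  -- rewrite the p-power
  have hk0 : (k:ℝ) ≠ 0 := by positivity
  have hpow : ((K * Real.log r / r^(k-1)) ^ ((1:ℝ)/k)) ^ (3*k*l)
      = (K * Real.log r)^(3*l) / (r^(k-1))^(3*l) := by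
    rw [← Real.rpow_natCast ((K * Real.log r / r^(k-1)) ^ ((1:ℝ)/k)) (3*k*l),
      ← Real.rpow_mul hx]
    have : (1:ℝ)/k * ((3*k*l : ℕ) : ℝ) = ((3*l : ℕ) : ℝ) := by
      push_cast; field_simp
    rw [this, Real.rpow_natCast, div_pow]
  rw [hpow]
  have hD0 : (0:ℝ) < (r^(k-1))^(3*l) := by positivity
  rw [← mul_div_assoc, div_le_iff₀ hD0]
  -- key exponent inequality
  have hkey : ((l-1)*(3*k) : ℕ) + 3 ≤ ((k-1)*(3*l) : ℕ) := by
    obtain ⟨m, rfl⟩ : ∃ m, l = m + 1 := ⟨l - 1, by omega⟩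
    obtain ⟨t, rfl⟩ : ∃ t, k = m + 2 + t := ⟨k - m - 2, by omega⟩
    have e1 : m + 1 - 1 = m := rfl
    have e2 : m + 2 + t - 1 = m + 1 + t := by omega
    rw [e1, e2]
    nlinarith [Nat.zero_le (m*t)]
  have h3 : r ^ ((l-1)*(3*k)) * r ^ δ ≤ r ^ (-3+δ) * (r^(k-1))^(3*l) := by
    rw [← pow_mul, ← Real.rpow_natCast r ((l-1)*(3*k)), ← Real.rpow_natCast r ((k-1)*(3*l)),
      ← Real.rpow_add hr0, ← Real.rpow_add hr0]
    apply Real.rpow_le_rpow_of_exponent_le hr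
    have : (((l-1)*(3*k) : ℕ) : ℝ) + 3 ≤ (((k-1)*(3*l) : ℕ) : ℝ) := by exact_mod_cast hkey
    linarith
  have h2 : (Real.log r)^(3*l) ≤ (1/δ')^(3*l) * r ^ δ := by
    have hle : Real.log r ≤ r ^ δ' / δ' := Real.log_le_rpow_div hr0.le hδ'0
    calc (Real.log r)^(3*l) ≤ (r ^ δ' / δ')^(3*l) := pow_le_pow_left₀ hlog hle _
      _ = (1/δ')^(3*l) * (r ^ δ')^(3*l) := by rw [div_pow, one_div, inv_pow]; ring
      _ = (1/δ')^(3*l) * r ^ δ := by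
          rw [← Real.rpow_natCast (r ^ δ') (3*l), ← Real.rpow_mul hr0.le]
          congr 1
          rw [hδ']
          push_cast
          field_simp
  have h1 : (((n+1)^((l-1)*(3*k)) : ℕ) : ℝ) ≤ 2^((l-1)*(3*k)) * r^((l-1)*(3*k)) := by
    push_cast
    rw [← mul_pow]
    apply pow_le_pow_left₀ (by positivity)
    linarith
  calc (((n+1)^((l-1)*(3*k)) : ℕ) : ℝ) * (K * Real.log r)^(3*l)
      = (((n+1)^((l-1)*(3*k)) : ℕ) : ℝ) * (K^(3*l) * (Real.log r)^(3*l)) := by rw [mul_pow]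
    _ ≤ (2^((l-1)*(3*k)) * r^((l-1)*(3*k))) * (K^(3*l) * ((1/δ')^(3*l) * r ^ δ)) := by
        apply mul_le_mul h1 (mul_le_mul_of_nonneg_left h2 (by positivity))
          (mul_nonneg (by positivity) (pow_nonneg hlog _)) (by positivity)
    _ = (2^((l-1)*(3*k)) * K^(3*l) * (1/δ')^(3*l)) * (r^((l-1)*(3*k)) * r ^ δ) := by ring
    _ ≤ (2^((l-1)*(3*k)) * K^(3*l) * (1/δ')^(3*l)) * (r ^ (-3+δ) * (r^(k-1))^(3*l)) := by
        apply mul_le_mul_of_nonneg_left h3 (by positivity)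
    _ = 2^((l-1)*(3*k)) * K^(3*l) * (1/δ')^(3*l) * r ^ (-3+δ) * (r^(k-1))^(3*l) := by ring

lemma measure_bound (n k l i : ℕ) (hk : 0 < k) (hl : 1 ≤ l) (p : ℝ) (hp : 0 ≤ p) :
    randSet n p {ω | 3*k ≤ Ystar n l i ω} ≤
      ENNReal.ofReal ((((n+1) ^ ((l-1)*(3*k)) : ℕ) : ℝ) * p ^ (3*k*l)) := by
  classical
  set q := min (ENNReal.ofReal p) 1 with hq
  set Reps : Finset (Finset (Fin (n+1))) :=
    Finset.univ.filter (fun S => S.card = l ∧ (∑ j ∈ S, (j:ℕ)) = i) with hReps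
  set Good : Finset (Finset (Finset (Fin (n+1)))) :=
    (Reps.powersetCard (3*k)).filter fun 𝒞 =>
      (𝒞 : Set (Finset (Fin (n+1)))).Pairwise fun S T => Disjoint S T with hGood
  have hsub : {ω | 3*k ≤ Ystar n l i ω} ⊆
      ⋃ 𝒞 ∈ Good, {ω : Fin (n+1) → Bool | ∀ j ∈ 𝒞.biUnion id, ω j = true} := by
    intro ω hω
    simp only [Set.mem_setOf_eq, Ystar] at hω
    rw [Finset.le_sup_iff (by positivity : (⊥ : ℕ) < 3*k)] at hω
    obtain ⟨𝒞₀, h𝒞₀, hcard₀⟩ := hω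
    rw [Finset.mem_filter] at h𝒞₀
    obtain ⟨-, hrep, hpw⟩ := h𝒞₀
    obtain ⟨𝒞, h𝒞sub, h𝒞card⟩ := Finset.exists_subset_card_eq hcard₀
    have h𝒞Good : 𝒞 ∈ Good := by
      rw [hGood, Finset.mem_filter, Finset.mem_powersetCard]
      refine ⟨⟨?_, h𝒞card⟩, hpw.mono (by exact_mod_cast h𝒞sub)⟩
      intro S hS
      have := hrep S (h𝒞sub hS)
      simp only [repFinsets, Finset.mem_filter] at this
      rw [hReps, Finset.mem_filter]
      exact ⟨Finset.mem_univ _, this.2.1, this.2.2.1⟩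
    refine Set.mem_biUnion h𝒞Good ?_
    intro j hj
    rw [Finset.mem_biUnion] at hj
    obtain ⟨S, hS, hjS⟩ := hj
    have := hrep S (h𝒞sub hS)
    simp only [repFinsets, Finset.mem_filter] at this
    exact this.2.2.2 j hjS
  have hcardbi : ∀ 𝒞 ∈ Good, (𝒞.biUnion id).card = 3*k*l := by
    intro 𝒞 h𝒞
    rw [hGood, Finset.mem_filter, Finset.mem_powersetCard] at h𝒞
    obtain ⟨⟨hsubR, hcard⟩, hpw⟩ := h𝒞
    have hcb := Finset.card_biUnion (s := 𝒞) (t := id) (fun x hx y hy hxy => hpw hx hy hxy)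
    rw [hcb]
    have : ∀ S ∈ 𝒞, S.card = l := by
      intro S hS
      have := hsubR hS
      rw [hReps, Finset.mem_filter] at this
      exact this.2.1
    simp only [id_eq]
    rw [Finset.sum_congr rfl this, Finset.sum_const, hcard, smul_eq_mul]
  calc randSet n p {ω | 3*k ≤ Ystar n l i ω}
      ≤ randSet n p (⋃ 𝒞 ∈ Good, {ω : Fin (n+1) → Bool | ∀ j ∈ 𝒞.biUnion id, ω j = true}) :=
        measure_mono hsub
    _ ≤ ∑ 𝒞 ∈ Good, randSet n p {ω : Fin (n+1) → Bool | ∀ j ∈ 𝒞.biUnion id, ω j = true} :=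
        measure_biUnion_finset_le _ _
    _ = ∑ 𝒞 ∈ Good, q ^ (𝒞.biUnion id).card := by
        exact Finset.sum_congr rfl fun 𝒞 _ => cyl_measure n p _
    _ = ∑ 𝒞 ∈ Good, q ^ (3*k*l) :=
        Finset.sum_congr rfl fun 𝒞 h𝒞 => by rw [hcardbi 𝒞 h𝒞]
    _ = (Good.card : ℝ≥0∞) * q ^ (3*k*l) := by
        rw [Finset.sum_const, nsmul_eq_mul]
    _ ≤ ((((n+1) ^ ((l-1)*(3*k)) : ℕ) : ℝ≥0∞)) * (ENNReal.ofReal p) ^ (3*k*l) := by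
        gcongr
        · exact_mod_cast calc Good.card ≤ (Reps.powersetCard (3*k)).card :=
              Finset.card_filter_le _ _
            _ = Reps.card.choose (3*k) := Finset.card_powersetCard _ _
            _ ≤ Reps.card ^ (3*k) := Nat.choose_le_pow _ _
            _ ≤ ((n+1)^(l-1)) ^ (3*k) := Nat.pow_le_pow_left (reps_card_le n l i hl) _
            _ = (n+1) ^ ((l-1)*(3*k)) := by rw [← pow_mul]
        · exact min_le_left _ _
    _ = ENNReal.ofReal ((((n+1) ^ ((l-1)*(3*k)) : ℕ) : ℝ) * p ^ (3*k*l)) := by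
        rw [ENNReal.ofReal_mul (by positivity), ← ENNReal.ofReal_pow hp,
          ENNReal.ofReal_natCast]

/-- disjointness-lemma consequence. For fixed `k ≥ 3`, `α ∈ (0,1)`,
`ε > 0`, `K = (4+ε)(k!)²/α^{k-1}`, `p_n = (K·log n/n^{k-1})^{1/k}`: for every
`1 ≤ l ≤ k-1` and `δ > 0` there is a constant `C` with
`P(Y*_{l,n}(i) ≥ 3k) ≤ C·n^{-3+δ}` for all `n` and all `1 ≤ i ≤ (k-α)n`. -/
theorem disjoint_reps_bound (k : ℕ) (hk : 3 ≤ k) (α ε : ℝ)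
    (hα0 : 0 < α) (hα1 : α < 1) (hε : 0 < ε)
    (l : ℕ) (hl1 : 1 ≤ l) (hl2 : l ≤ k - 1) (δ : ℝ) (hδ : 0 < δ) :
    ∃ C : ℝ, ∀ n : ℕ, ∀ i : ℕ, 1 ≤ i → (i : ℝ) ≤ ((k : ℝ) - α) * n →
      randSet n (((4 + ε) * (k.factorial : ℝ) ^ 2 / α ^ (k - 1) * Real.log n /
            (n : ℝ) ^ (k - 1)) ^ ((1 : ℝ) / k))
          {ω | 3 * k ≤ Ystar n l i ω} ≤
        ENNReal.ofReal (C * (n : ℝ) ^ (-3 + δ)) := by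
  classical
  have hK : 0 < (4+ε) * (k.factorial:ℝ)^2 / α^(k-1) := by positivity
  obtain ⟨C, hC⟩ := real_bound k l hk hl1 hl2 _ δ hK hδ
  refine ⟨C, ?_⟩
  intro n i hi1 hi2
  rcases Nat.eq_zero_or_pos n with rfl | hn
  · exfalso
    have h1 : (1:ℝ) ≤ (i:ℝ) := by exact_mod_cast hi1
    simp only [Nat.cast_zero, mul_zero] at hi2
    linarith
  set p : ℝ := ((4 + ε) * (k.factorial : ℝ) ^ 2 / α ^ (k - 1) * Real.log n /
      (n : ℝ) ^ (k - 1)) ^ ((1 : ℝ) / k) with hp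
  have hr1 : (1:ℝ) ≤ (n:ℝ) := by exact_mod_cast hn
  have hp0 : 0 ≤ p :=
    Real.rpow_nonneg (div_nonneg (mul_nonneg hK.le (Real.log_nonneg hr1)) (by positivity)) _
  calc randSet n p {ω | 3*k ≤ Ystar n l i ω}
      ≤ ENNReal.ofReal ((((n+1)^((l-1)*(3*k)) : ℕ) : ℝ) * p ^ (3*k*l)) :=
        measure_bound n k l i (by omega) hl1 p hp0
    _ ≤ ENNReal.ofReal (C * (n:ℝ) ^ (-3+δ)) := ENNReal.ofReal_le_ofReal (hC n hn)
end

section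
/- (Lemma 3.2) Fix an integer k ≥ 3, α ∈ (0,1), ε > 0, and set K = (4+ε)·(k!)²/α^{k−1} and p_n = (K·log n / n^{k−1})^{1/k}. Then for every δ > 0 there is a constant C such that for all n and all integers i with 1 ≤ i ≤ (k−α)·n, P(Y_{k−1,n}(i) ≥ (3k−1)^{k−1}·(k−1)!) ≤ C·n^{−3+δ}. -/
open MeasureTheory Filter
open scoped ENNReal

section AuxLemmas
open Finset

lemma sunflower_fixed_sum {β : Type*} [DecidableEq β] (w : β → ℕ) (hw : Function.Injective w) :
    ∀ (s : ℕ), 1 ≤ s → ∀ (r : ℕ), 3 ≤ r → ∀ (t : ℕ) (F : Finset (Finset β)),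
    (∀ S ∈ F, S.card = s ∧ ∑ x ∈ S, w x = t) →
    Nat.factorial s * (r-1)^s ≤ F.card →
    ∃ F' ⊆ F, F'.card = r ∧ ∃ C : Finset β,
      ∀ S ∈ F', ∀ T ∈ F', S ≠ T → S ∩ T = C := by
  intro s
  induction s with
  | zero => omega
  | succ s ih =>
    intro _ r hr t F hF hcard
    classical
    by_cases hs0 : s = 0
    · -- base case: sets of size 1 with equal sum: at most one such set
      subst hs0
      exfalso
      have h2 : 2 ≤ F.card := by
        refine le_trans ?_ hcard
        have : 2 ≤ r - 1 := by omega
        simpa [Nat.factorial] using this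
      obtain ⟨S, hS, T, hT, hST⟩ := Finset.one_lt_card.mp h2
      obtain ⟨a, ha⟩ := Finset.card_eq_one.mp (hF S hS).1
      obtain ⟨b, hb⟩ := Finset.card_eq_one.mp (hF T hT).1
      have hsa : w a = t := by have := (hF S hS).2; rwa [ha, Finset.sum_singleton] at this
      have hsb : w b = t := by have := (hF T hT).2; rwa [hb, Finset.sum_singleton] at this
      exact hST (by rw [ha, hb, hw (hsa.trans hsb.symm)])
    have hs1 : 1 ≤ s := by omega
    -- maximal pairwise disjoint subfamily
    obtain ⟨M, hMmem, hMmax⟩ := Finset.exists_max_image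
      ((F.powerset).filter fun M => ∀ S ∈ M, ∀ T ∈ M, S ≠ T → Disjoint S T)
      Finset.card ⟨∅, by simp⟩
    simp only [mem_filter, mem_powerset] at hMmem
    obtain ⟨hMF, hMdisj⟩ := hMmem
    by_cases hMr : r ≤ M.card
    · -- r pairwise disjoint sets
      obtain ⟨F', hF'M, hF'card⟩ := Finset.exists_subset_card_eq hMr
      refine ⟨F', hF'M.trans hMF, hF'card, ∅, fun S hS T hT hST => ?_⟩
      exact Finset.disjoint_iff_inter_eq_empty.mp
        (hMdisj S (hF'M hS) T (hF'M hT) hST)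
    · -- every set meets U := union of M
      set U : Finset β := M.biUnion id with hU
      have hmeet : ∀ S ∈ F, ∃ x ∈ U, x ∈ S := by
        intro S hS
        by_contra hcon
        push_neg at hcon
        have hSdisjU : ∀ T ∈ M, Disjoint S T := by
          intro T hT
          rw [Finset.disjoint_left]
          intro x hxS hxT
          exact hcon x (Finset.mem_biUnion.mpr ⟨T, hT, hxT⟩) hxS
        have hSnotM : S ∉ M := by
          intro hSM
          have hd : Disjoint S S := hSdisjU S hSM
          have hSemp : S = ∅ := by simpa using disjoint_self.mp hd
          have := (hF S hS).1
          rw [hSemp] at this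
          simp at this
        have hins : insert S M ∈ (F.powerset).filter
            fun M => ∀ S ∈ M, ∀ T ∈ M, S ≠ T → Disjoint S T := by
          simp only [mem_filter, mem_powerset]
          constructor
          · exact Finset.insert_subset hS hMF
          · intro A hA B hB hAB
            rcases Finset.mem_insert.mp hA with rfl | hA'
            · rcases Finset.mem_insert.mp hB with rfl | hB'
              · exact absurd rfl hAB
              · exact hSdisjU B hB'
            · rcases Finset.mem_insert.mp hB with rfl | hB'
              · exact (hSdisjU A hA').symm
              · exact hMdisj A hA' B hB' hAB
        have := hMmax _ hins
        rw [Finset.card_insert_of_notMem hSnotM] at this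
        omega
      have hUcard : U.card ≤ (r - 1) * (s + 1) := by
        calc U.card ≤ ∑ T ∈ M, (id T).card := Finset.card_biUnion_le
        _ = ∑ T ∈ M, (s+1) := by
            refine Finset.sum_congr rfl fun T hT => ?_
            exact (hF T (hMF hT)).1
        _ = M.card * (s+1) := by rw [Finset.sum_const, smul_eq_mul]
        _ ≤ (r-1) * (s+1) := by
            have : M.card ≤ r - 1 := by omega
            exact Nat.mul_le_mul_right _ this
      -- pigeonhole: some x is in many sets
      have hpig : ∃ x ∈ U, Nat.factorial s * (r-1)^s ≤ (F.filter fun S => x ∈ S).card := by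
        by_contra hcon
        push_neg at hcon
        have hcover : F ⊆ U.biUnion fun x => F.filter fun S => x ∈ S := by
          intro S hS
          obtain ⟨x, hxU, hxS⟩ := hmeet S hS
          exact Finset.mem_biUnion.mpr ⟨x, hxU, Finset.mem_filter.mpr ⟨hS, hxS⟩⟩
        have h1 : F.card ≤ ∑ x ∈ U, (F.filter fun S => x ∈ S).card :=
          le_trans (Finset.card_le_card hcover) Finset.card_biUnion_le
        have h2 : ∑ x ∈ U, (F.filter fun S => x ∈ S).card
            ≤ U.card * (Nat.factorial s * (r-1)^s - 1) := by
          rw [← smul_eq_mul, ← Finset.sum_const]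
          refine Finset.sum_le_sum fun x hx => ?_
          have := hcon x hx
          omega
        have h3 : U.card * (Nat.factorial s * (r-1)^s - 1)
            < Nat.factorial (s+1) * (r-1)^(s+1) := by
          calc U.card * (Nat.factorial s * (r-1)^s - 1)
              ≤ ((r-1)*(s+1)) * (Nat.factorial s * (r-1)^s - 1) :=
                Nat.mul_le_mul_right _ hUcard
          _ < ((r-1)*(s+1)) * (Nat.factorial s * (r-1)^s) := by
                have hpos : 0 < Nat.factorial s * (r-1)^s :=
                  Nat.mul_pos (Nat.factorial_pos s) (Nat.pow_pos (by omega))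
                have hposU : 0 < (r-1)*(s+1) := Nat.mul_pos (by omega) (by omega)
                exact mul_lt_mul_of_pos_left (by omega) hposU
          _ = Nat.factorial (s+1) * (r-1)^(s+1) := by
                rw [Nat.factorial_succ]; ring
        omega
      obtain ⟨x, hxU, hxcard⟩ := hpig
      -- the link of x
      set Fx := F.filter fun S => x ∈ S with hFx
      set G := Fx.image fun S => S.erase x with hG
      have hGcard : G.card = Fx.card := by
        refine Finset.card_image_of_injOn fun S hS T hT hST => ?_
        have hxS : x ∈ S := (Finset.mem_filter.mp hS).2
        have hxT : x ∈ T := (Finset.mem_filter.mp hT).2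
        rw [← Finset.insert_erase hxS, ← Finset.insert_erase hxT, hST]
      have hGprop : ∀ T ∈ G, T.card = s ∧ ∑ y ∈ T, w y = t - w x := by
        intro T hT
        obtain ⟨S, hS, rfl⟩ := Finset.mem_image.mp hT
        have hSF : S ∈ F := (Finset.mem_filter.mp hS).1
        have hxS : x ∈ S := (Finset.mem_filter.mp hS).2
        constructor
        · rw [Finset.card_erase_of_mem hxS, (hF S hSF).1]; omega
        · have hsum := (hF S hSF).2
          rw [← Finset.insert_erase hxS, Finset.sum_insert (Finset.notMem_erase _ _)] at hsum
          omega
      obtain ⟨G', hG'G, hG'card, C', hC'⟩ := ih hs1 r hr (t - w x) G hGprop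
        (by rw [hGcard]; exact hxcard)
      -- pull back
      have hxnot : ∀ T ∈ G', x ∉ T := by
        intro T hT
        obtain ⟨S, _, rfl⟩ := Finset.mem_image.mp (hG'G hT)
        exact Finset.notMem_erase _ _
      refine ⟨G'.image fun T => insert x T, ?_, ?_, insert x C', ?_⟩
      · intro S hS
        obtain ⟨T, hT, rfl⟩ := Finset.mem_image.mp hS
        obtain ⟨S', hS', rfl⟩ := Finset.mem_image.mp (hG'G hT)
        have hxS' : x ∈ S' := (Finset.mem_filter.mp hS').2
        rw [Finset.insert_erase hxS']
        exact (Finset.mem_filter.mp hS').1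
      · rw [Finset.card_image_of_injOn, hG'card]
        intro S hS T hT hST
        have h2 : insert x S = insert x T := hST
        have : (insert x S).erase x = (insert x T).erase x := by rw [h2]
        rwa [Finset.erase_insert (hxnot S hS), Finset.erase_insert (hxnot T hT)] at this
      · intro S hS T hT hST
        obtain ⟨S', hS', rfl⟩ := Finset.mem_image.mp hS
        obtain ⟨T', hT', rfl⟩ := Finset.mem_image.mp hT
        have hST' : S' ≠ T' := fun h => hST (by rw [h])
        show insert x S' ∩ insert x T' = insert x C'
        rw [Finset.insert_inter_of_mem (Finset.mem_insert_self _ _),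
          Finset.inter_insert_of_notMem (hxnot S' hS'), hC' S' hS' T' hT' hST']


lemma bern_apply_true (p : ℝ) : bern p true = min (ENNReal.ofReal p) 1 := by
  rw [bern, PMF.bernoulli_apply]; rfl

lemma bern_true (p : ℝ) : (bern p).toMeasure {true} = min (ENNReal.ofReal p) 1 := by
  rw [PMF.toMeasure_apply_singleton _ _ (measurableSet_singleton _)]
  exact bern_apply_true p

lemma randSet_cylinder (n : ℕ) (p : ℝ) (W : Finset (Fin (n+1))) :
    randSet n p {ω | ∀ x ∈ W, ω x = true} = (min (ENNReal.ofReal p) 1) ^ W.card := by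
  have hset : {ω : Fin (n+1) → Bool | ∀ x ∈ W, ω x = true}
      = Set.pi Set.univ (fun x => if x ∈ W then {true} else Set.univ) := by
    ext ω
    simp only [Set.mem_setOf_eq, Set.mem_pi, Set.mem_univ, forall_true_left]
    constructor
    · intro h x
      by_cases hx : x ∈ W <;> simp [hx, h x]
    · intro h x hx
      have := h x
      simp [hx] at this
      exact this
  rw [randSet, hset, Measure.pi_pi]
  have : ∀ x : Fin (n+1), (bern p).toMeasure (if x ∈ W then ({true} : Set Bool) else Set.univ)
      = if x ∈ W then min (ENNReal.ofReal p) 1 else 1 := by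
    intro x
    by_cases hx : x ∈ W
    · simp only [if_pos hx]; exact bern_true p
    · simp only [if_neg hx, measure_univ]
  simp_rw [this]
  rw [Finset.prod_ite_mem, Finset.univ_inter, Finset.prod_const]


/-- Index set of sunflower configurations: pairs (core C, petal family P). -/
def Idx (n i s r c : ℕ) : Finset (Finset (Fin (n+1)) × Finset (Finset (Fin (n+1)))) :=
  Finset.univ.filter fun CP =>
    CP.1.card = c ∧ CP.2.card = r ∧
    (∀ Q ∈ CP.2, Q.card = s - c ∧ (∑ x ∈ CP.1, (x:ℕ)) + ∑ x ∈ Q, (x:ℕ) = i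
      ∧ Disjoint CP.1 Q) ∧
    (∀ Q ∈ CP.2, ∀ Q' ∈ CP.2, Q ≠ Q' → Disjoint Q Q')

def wset {n : ℕ} (CP : Finset (Fin (n+1)) × Finset (Finset (Fin (n+1)))) :
    Finset (Fin (n+1)) := CP.1 ∪ CP.2.biUnion id

lemma wset_card {n i s r c : ℕ} (hc : c < s) (CP) (h : CP ∈ Idx n i s r c) :
    (wset CP).card = c + r * (s - c) := by
  simp only [Idx, mem_filter, mem_univ, true_and] at h
  obtain ⟨h1, h2, h3, h4⟩ := h
  have hdisj : Disjoint CP.1 (CP.2.biUnion id) := by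
    rw [Finset.disjoint_biUnion_right]
    exact fun Q hQ => (h3 Q hQ).2.2
  rw [wset, Finset.card_union_of_disjoint hdisj, h1]
  have hb : (CP.2.biUnion id).card = ∑ Q ∈ CP.2, (id Q).card :=
    Finset.card_biUnion (fun Q hQ Q' hQ' hne => h4 Q hQ Q' hQ' hne)
  rw [hb]
  congr 1
  calc ∑ Q ∈ CP.2, (id Q).card = ∑ Q ∈ CP.2, (s - c) :=
        Finset.sum_congr rfl fun Q hQ => (h3 Q hQ).1
  _ = r * (s-c) := by rw [Finset.sum_const, h2, smul_eq_mul]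

/-- Cover lemma: if `Y` is large, some sunflower configuration is fully present. -/
lemma cover {n i s k ω} (hs : 1 ≤ s) (hr : 3 ≤ 3*k) (hY : Nat.factorial s * (3*k-1)^s ≤ Y n s i ω) :
    ∃ c < s, ∃ CP ∈ Idx n i s (3*k) c, ∀ x ∈ wset CP, ω x = true := by
  classical
  set r := 3*k with hrdef
  set F := repFinsets n s i ω with hFdef
  have hF : ∀ S ∈ F, S.card = s ∧ ∑ x ∈ S, ((x : Fin (n+1)) : ℕ) = i := by
    intro S hS
    simp only [hFdef, repFinsets, mem_filter] at hS
    exact ⟨hS.2.1, hS.2.2.1⟩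
  have htrue : ∀ S ∈ F, ∀ x ∈ S, ω x = true := by
    intro S hS
    simp only [hFdef, repFinsets, mem_filter] at hS
    exact hS.2.2.2
  obtain ⟨F', hF'F, hF'card, C, hC⟩ := sunflower_fixed_sum (fun x : Fin (n+1) => (x:ℕ))
    (fun a b hab => Fin.val_injective hab) s hs r hr i F hF hY
  -- C is contained in every member, and is a proper subset
  have h2r : 2 ≤ r := by omega
  have hCsub : ∀ S ∈ F', C ⊆ S := by
    intro S hS
    obtain ⟨T, hT, hTS⟩ : ∃ T ∈ F', T ≠ S := by
      by_contra hcon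
      push_neg at hcon
      have : F'.card ≤ 1 := Finset.card_le_one.mpr fun a ha b hb => by
        rw [hcon a ha, hcon b hb]
      omega
    rw [← hC S hS T hT (Ne.symm hTS)]
    exact Finset.inter_subset_left
  have hCcard : C.card < s := by
    obtain ⟨S, hS, T, hT, hST⟩ := Finset.one_lt_card.mp (by omega : 1 < F'.card)
    have hCS : C ⊂ S := by
      refine Finset.ssubset_iff_subset_ne.mpr ⟨hCsub S hS, ?_⟩
      intro h
      have hint : S ∩ T = C := hC S hS T hT hST
      have hsub : S ⊆ T := by
        intro a ha
        have haC : a ∈ C := by rw [h]; exact ha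
        rw [← hint] at haC
        exact (Finset.mem_inter.mp haC).2
      exact hST (Finset.eq_of_subset_of_card_le hsub
        ((hF T (hF'F hT)).1.trans (hF S (hF'F hS)).1.symm).le)
    calc C.card < S.card := Finset.card_lt_card hCS
    _ = s := (hF S (hF'F hS)).1
  refine ⟨C.card, hCcard, ⟨C, F'.image fun S => S \ C⟩, ?_, ?_⟩
  · simp only [Idx, mem_filter, mem_univ, true_and]
    refine ⟨?_, ?_, ?_⟩
    · rw [Finset.card_image_of_injOn, hF'card]
      intro S hS T hT hST
      have hST' : S \ C = T \ C := hST
      rw [← Finset.sdiff_union_of_subset (hCsub S hS),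
        ← Finset.sdiff_union_of_subset (hCsub T hT), hST']
    · intro Q hQ
      obtain ⟨S, hS, rfl⟩ := Finset.mem_image.mp hQ
      refine ⟨?_, ?_, Finset.disjoint_sdiff⟩
      · rw [Finset.card_sdiff_of_subset (hCsub S hS), (hF S (hF'F hS)).1]
      · rw [add_comm, Finset.sum_sdiff (hCsub S hS), (hF S (hF'F hS)).2]
    · intro Q hQ Q' hQ' hne
      obtain ⟨S, hS, rfl⟩ := Finset.mem_image.mp hQ
      obtain ⟨T, hT, rfl⟩ := Finset.mem_image.mp hQ'
      have hST : S ≠ T := fun h => hne (by rw [h])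
      rw [Finset.disjoint_left]
      intro a haS haT
      have : a ∈ S ∩ T := Finset.mem_inter.mpr ⟨(Finset.mem_sdiff.mp haS).1,
        (Finset.mem_sdiff.mp haT).1⟩
      rw [hC S hS T hT hST] at this
      exact (Finset.mem_sdiff.mp haS).2 this
  · intro x hx
    rcases Finset.mem_union.mp hx with hxC | hxB
    · obtain ⟨S, hS⟩ : F'.Nonempty := Finset.card_pos.mp (by omega)
      exact htrue S (hF'F hS) x (hCsub S hS hxC)
    · obtain ⟨Q, hQ, hxQ⟩ := Finset.mem_biUnion.mp hxB
      obtain ⟨S, hS, rfl⟩ := Finset.mem_image.mp hQ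
      exact htrue S (hF'F hS) x (Finset.mem_sdiff.mp hxQ).1


/-- erase the maximum element -/
def emx {n : ℕ} (Q : Finset (Fin (n+1))) : Finset (Fin (n+1)) := Q.erase (WithBot.unbotD 0 Q.max)

lemma maxEl_mem {n : ℕ} {Q : Finset (Fin (n+1))} (hQ : Q.Nonempty) : WithBot.unbotD 0 Q.max ∈ Q := by
  rw [← Finset.coe_max' hQ, WithBot.unbotD_coe]
  exact Finset.max'_mem Q hQ

lemma em_inj {n m t : ℕ} {Q₁ Q₂ : Finset (Fin (n+1))} (hm : 1 ≤ m)
    (h1 : Q₁.card = m) (h2 : Q₂.card = m)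
    (hs1 : ∑ x ∈ Q₁, (x:ℕ) = t) (hs2 : ∑ x ∈ Q₂, (x:ℕ) = t)
    (he : emx Q₁ = emx Q₂) : Q₁ = Q₂ := by
  have hne1 : Q₁.Nonempty := Finset.card_pos.mp (by omega)
  have hne2 : Q₂.Nonempty := Finset.card_pos.mp (by omega)
  set m₁ := WithBot.unbotD 0 Q₁.max
  set m₂ := WithBot.unbotD 0 Q₂.max
  have hm1 : m₁ ∈ Q₁ := maxEl_mem hne1
  have hm2 : m₂ ∈ Q₂ := maxEl_mem hne2
  have hsum1 : (m₁ : ℕ) + ∑ x ∈ Q₁.erase m₁, (x:ℕ) = t := by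
    rw [Finset.add_sum_erase _ _ hm1]; exact hs1
  have hsum2 : (m₂ : ℕ) + ∑ x ∈ Q₂.erase m₂, (x:ℕ) = t := by
    rw [Finset.add_sum_erase _ _ hm2]; exact hs2
  have heq : Q₁.erase m₁ = Q₂.erase m₂ := he
  rw [heq] at hsum1
  have : (m₁ : ℕ) = (m₂ : ℕ) := by omega
  have hmm : m₁ = m₂ := Fin.val_injective this
  rw [← Finset.insert_erase hm1, ← Finset.insert_erase hm2, heq, hmm]

lemma Idx_card_le (n i s r c : ℕ) (hc : c < s) :
    (Idx n i s r c).card ≤ (n+1)^c * ((n+1)^(s-1-c))^r := by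
  classical
  have key : (Idx n i s r c).card ≤
      ((Finset.powersetCard c (Finset.univ : Finset (Fin (n+1)))) ×ˢ
        (Finset.powersetCard r (Finset.powersetCard (s-1-c) (Finset.univ : Finset (Fin (n+1)))))).card := by
    apply Finset.card_le_card_of_injOn (fun CP => (CP.1, CP.2.image emx))
    · -- maps to
      intro CP hCP
      simp only [Finset.mem_coe, Idx, mem_filter, mem_univ, true_and] at hCP
      obtain ⟨h1, h2, h3, _⟩ := hCP
      rw [Finset.mem_coe, Finset.mem_product]
      constructor
      · rw [Finset.mem_powersetCard]
        exact ⟨Finset.subset_univ _, h1⟩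
      · rw [Finset.mem_powersetCard]
        constructor
        · intro R hR
          obtain ⟨Q, hQ, rfl⟩ := Finset.mem_image.mp hR
          rw [Finset.mem_powersetCard]
          refine ⟨Finset.subset_univ _, ?_⟩
          have hQc := (h3 Q hQ).1
          have hQne : Q.Nonempty := Finset.card_pos.mp (by omega)
          rw [emx, Finset.card_erase_of_mem (maxEl_mem hQne), hQc]
          omega
        · rw [Finset.card_image_of_injOn, h2]
          intro Q₁ hQ₁ Q₂ hQ₂ he
          refine em_inj (m := s - c) (t := i - ∑ x ∈ CP.1, (x:ℕ)) (by omega)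
            (h3 Q₁ hQ₁).1 (h3 Q₂ hQ₂).1 ?_ ?_ he
          · have := (h3 Q₁ hQ₁).2.1; omega
          · have := (h3 Q₂ hQ₂).2.1; omega
    · -- injective
      intro CP hCP CP' hCP' he
      simp only [Finset.mem_coe, Idx, mem_filter, mem_univ, true_and] at hCP
      simp only [Finset.mem_coe, Idx, mem_filter, mem_univ, true_and] at hCP'
      obtain ⟨h1, h2, h3, -⟩ := hCP
      obtain ⟨h1', h2', h3', -⟩ := hCP'
      have he' : (CP.1, CP.2.image emx) = (CP'.1, CP'.2.image emx) := he
      have hfst : CP.1 = CP'.1 := (Prod.ext_iff.mp he').1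
      have hsnd : CP.2.image emx = CP'.2.image emx := (Prod.ext_iff.mp he').2
      have hP : CP.2 = CP'.2 := by
        have hinj : ∀ Q₁ ∈ CP.2, ∀ Q₂ ∈ CP'.2, emx Q₁ = emx Q₂ → Q₁ = Q₂ := by
          intro Q₁ hQ₁ Q₂ hQ₂ h
          refine em_inj (m := s - c) (by omega) (h3 Q₁ hQ₁).1 (h3' Q₂ hQ₂).1
            (t := i - ∑ x ∈ CP.1, (x:ℕ)) ?_ ?_ h
          · have := (h3 Q₁ hQ₁).2.1; omega
          · have := (h3' Q₂ hQ₂).2.1; rw [hfst]; omega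
        ext Q
        constructor
        · intro hQ
          have : emx Q ∈ CP'.2.image emx := hsnd ▸ Finset.mem_image_of_mem emx hQ
          obtain ⟨Q', hQ', hQQ'⟩ := Finset.mem_image.mp this
          exact (hinj Q hQ Q' hQ' hQQ'.symm) ▸ hQ'
        · intro hQ
          have : emx Q ∈ CP.2.image emx := hsnd ▸ Finset.mem_image_of_mem emx hQ
          obtain ⟨Q', hQ', hQQ'⟩ := Finset.mem_image.mp this
          exact (hinj Q' hQ' Q hQ hQQ') ▸ hQ'
      exact Prod.ext hfst hP
  refine key.trans ?_
  simp only [Finset.card_product, Finset.card_powersetCard, Finset.card_univ,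
    Fintype.card_fin]
  refine Nat.mul_le_mul (Nat.choose_le_pow _ _) ?_
  calc ((n+1).choose (s-1-c)).choose r ≤ ((n+1).choose (s-1-c))^r := Nat.choose_le_pow _ _
  _ ≤ ((n+1)^(s-1-c))^r := Nat.pow_le_pow_left (Nat.choose_le_pow _ _) r
lemma measure_le_sum (n i k : ℕ) (p : ℝ) (hk : 3 ≤ k) :
    randSet n p {ω | (3*k-1)^(k-1) * (k-1).factorial ≤ Y n (k-1) i ω}
      ≤ ∑ c ∈ Finset.range (k-1), ((Idx n i (k-1) (3*k) c).card : ℝ≥0∞)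
          * (min (ENNReal.ofReal p) 1) ^ (c + 3*k*((k-1) - c)) := by
  have hsub : {ω : Fin (n+1) → Bool | (3*k-1)^(k-1) * (k-1).factorial ≤ Y n (k-1) i ω}
      ⊆ ⋃ c ∈ Finset.range (k-1), ⋃ CP ∈ Idx n i (k-1) (3*k) c,
        {ω | ∀ x ∈ wset CP, ω x = true} := by
    intro ω hω
    simp only [Set.mem_setOf_eq] at hω
    obtain ⟨c, hc, CP, hCP, hall⟩ := cover (n := n) (i := i) (s := k-1) (k := k) (ω := ω)
      (by omega) (by omega) (by rw [mul_comm]; exact hω)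
    refine Set.mem_iUnion₂.mpr ⟨c, Finset.mem_range.mpr hc, ?_⟩
    exact Set.mem_iUnion₂.mpr ⟨CP, hCP, hall⟩
  refine (measure_mono hsub).trans ?_
  refine (measure_biUnion_finset_le _ _).trans ?_
  refine Finset.sum_le_sum fun c hc => ?_
  refine (measure_biUnion_finset_le _ _).trans ?_
  refine le_of_eq ?_
  have : ∀ CP ∈ Idx n i (k-1) (3*k) c,
      randSet n p {ω | ∀ x ∈ wset CP, ω x = true}
        = (min (ENNReal.ofReal p) 1) ^ (c + 3*k*((k-1) - c)) := by
    intro CP hCP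
    rw [randSet_cylinder, wset_card (Finset.mem_range.mp hc) CP hCP]
  rw [Finset.sum_congr rfl this, Finset.sum_const, nsmul_eq_mul]

lemma log_le_rpow_div' {x a : ℝ} (hx : 1 ≤ x) (ha : 0 < a) : Real.log x ≤ x ^ a / a := by
  have hx0 : 0 < x := lt_of_lt_of_le one_pos hx
  have h1 : Real.log (x ^ a) = a * Real.log x := Real.log_rpow hx0 a
  have h2 : Real.log (x ^ a) ≤ x ^ a - 1 := Real.log_le_sub_one_of_pos (Real.rpow_pos_of_pos hx0 a)
  rw [h1] at h2
  rw [le_div_iff₀ ha]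
  nlinarith [Real.rpow_pos_of_pos hx0 a]

lemma p_le_bound (k n : ℕ) (K θ : ℝ) (hk : 3 ≤ k) (hn : 1 ≤ n) (hK : 0 < K) (hθ : 0 < θ) :
    (K * Real.log n / (n:ℝ)^(k-1)) ^ ((1:ℝ)/k)
      ≤ (K/((k:ℝ)*θ)) ^ ((1:ℝ)/k) * (n:ℝ) ^ (θ - ((k:ℝ)-1)/(k:ℝ)) := by
  have hn1 : (1:ℝ) ≤ n := by exact_mod_cast hn
  have hn0 : (0:ℝ) < n := by linarith
  have hk0 : (0:ℝ) < k := by positivity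
  have hkθ : (0:ℝ) < (k:ℝ)*θ := by positivity
  have hlog : Real.log n ≤ (n:ℝ)^((k:ℝ)*θ)/((k:ℝ)*θ) := log_le_rpow_div' hn1 hkθ
  have hlog0 : 0 ≤ Real.log n := Real.log_nonneg hn1
  have hcast : ((k-1:ℕ):ℝ) = (k:ℝ) - 1 := by
    have : 1 ≤ k := by omega
    push_cast [Nat.cast_sub this]
    ring
  have hbase : K * Real.log n / (n:ℝ)^(k-1)
      ≤ (K/((k:ℝ)*θ)) * (n:ℝ)^((k:ℝ)*θ - ((k:ℝ)-1)) := by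
    have h1 : K * Real.log n ≤ K * ((n:ℝ)^((k:ℝ)*θ)/((k:ℝ)*θ)) :=
      mul_le_mul_of_nonneg_left hlog hK.le
    have hpow : (0:ℝ) < (n:ℝ)^(k-1) := by positivity
    have h2 : K * Real.log n / (n:ℝ)^(k-1)
        ≤ K * ((n:ℝ)^((k:ℝ)*θ)/((k:ℝ)*θ)) / (n:ℝ)^(k-1) :=
      (div_le_div_iff_of_pos_right hpow).mpr h1
    refine h2.trans (le_of_eq ?_)
    rw [show ((n:ℝ)^(k-1) : ℝ) = (n:ℝ)^(((k-1:ℕ)):ℝ) from (Real.rpow_natCast _ _).symm,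
      hcast]
    rw [show K * ((n:ℝ)^((k:ℝ)*θ)/((k:ℝ)*θ)) / (n:ℝ)^((k:ℝ)-1)
        = (K/((k:ℝ)*θ)) * ((n:ℝ)^((k:ℝ)*θ) / (n:ℝ)^((k:ℝ)-1)) by ring]
    rw [← Real.rpow_sub hn0]
  have hb0 : 0 ≤ K * Real.log n / (n:ℝ)^(k-1) := by positivity
  have := Real.rpow_le_rpow hb0 hbase (by positivity : (0:ℝ) ≤ 1/(k:ℝ))
  refine this.trans (le_of_eq ?_)
  rw [Real.mul_rpow (by positivity) (Real.rpow_nonneg hn0.le _)]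
  congr 1
  rw [← Real.rpow_mul hn0.le]
  congr 1
  field_simp

lemma exp_bound (k c : ℕ) (θ δ : ℝ) (hk : 3 ≤ k) (hc : c ≤ k - 2) (hδ : 0 < δ)
    (hθ : θ = δ/(6*(k:ℝ)*k)) :
    ((c + 3*k*(k-2-c) : ℕ) : ℝ) + (θ - ((k:ℝ)-1)/(k:ℝ)) * ((c + 3*k*(k-1-c) : ℕ) : ℝ)
      ≤ -3 + δ := by
  have hkc2 : ((k-2-c:ℕ):ℝ) = (k:ℝ) - 2 - c := by
    have h1 : c + 2 ≤ k := by omega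
    push_cast [Nat.cast_sub (by omega : c ≤ k - 2), Nat.cast_sub (by omega : 2 ≤ k)]
    ring
  have hkc1 : ((k-1-c:ℕ):ℝ) = (k:ℝ) - 1 - c := by
    push_cast [Nat.cast_sub (by omega : c ≤ k - 1), Nat.cast_sub (by omega : 1 ≤ k)]
    ring
  set kk := (k:ℝ) with hkk
  set cc := (c:ℝ) with hcc
  have hkk3 : (3:ℝ) ≤ kk := by rw [hkk]; exact_mod_cast hk
  have hcc0 : (0:ℝ) ≤ cc := Nat.cast_nonneg c
  have hcck : cc ≤ kk - 2 := by
    have := hc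
    have h2 : (c:ℝ) ≤ ((k-2:ℕ):ℝ) := by exact_mod_cast hc
    rwa [Nat.cast_sub (by omega : 2 ≤ k)] at h2
  have hkpos : (0:ℝ) < kk := by linarith
  push_cast [hkc2, hkc1]
  set X := cc + 3*kk*(kk-2-cc) with hX
  set E := cc + 3*kk*(kk-1-cc) with hE
  have hE0 : 0 ≤ E := by rw [hE]; nlinarith
  have hE3 : E ≤ 3*kk*kk := by rw [hE]; nlinarith
  have hθE : θ * E ≤ δ/2 := by
    rw [hθ, div_mul_eq_mul_div, div_le_iff₀ (by positivity)]
    nlinarith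
  set u := (kk-1)/kk with hu
  have huk : u * kk = kk - 1 := div_mul_cancel₀ _ (ne_of_gt hkpos)
  have hmain : X - u*E ≤ -3 := by
    have h1 : kk * (X - u*E) = kk*X - (u*kk)*E := by ring
    rw [huk] at h1
    have h2 : kk*X - (kk-1)*E = cc - 3*kk - 3*kk*cc := by rw [hX, hE]; ring
    have h3 : kk * (X - u*E) ≤ kk * (-3) := by
      rw [h1, h2]; nlinarith
    exact le_of_mul_le_mul_left h3 hkpos
  clear_value X E u
  have hfin : X + (θ - u) * E = (X - u*E) + θ*E := by ring
  show X + (θ - u) * E ≤ -3 + δ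
  rw [hfin]
  linarith
lemma term_bound (k c n : ℕ) (K θ δ : ℝ) (hk : 3 ≤ k) (hc : c < k-1) (hn : 1 ≤ n)
    (hK : 0 < K) (hδ : 0 < δ) (hθdef : θ = δ/(6*(k:ℝ)*k)) :
    (((n+1)^c * ((n+1)^((k-1)-1-c))^(3*k) : ℕ) : ℝ)
      * ((K * Real.log n / (n:ℝ)^(k-1)) ^ ((1:ℝ)/k))^(c + 3*k*((k-1)-c))
    ≤ 2^(c + 3*k*(k-2-c)) * ((K/((k:ℝ)*θ))^((1:ℝ)/k))^(c + 3*k*(k-1-c))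
        * (n:ℝ)^(-3+δ:ℝ) := by
  have hn1 : (1:ℝ) ≤ n := by exact_mod_cast hn
  have hn0 : (0:ℝ) < n := by linarith
  have hk0 : (0:ℝ) < k := by
    have : 0 < k := by omega
    exact_mod_cast this
  have hθ0 : 0 < θ := by
    rw [hθdef]
    apply div_pos hδ
    nlinarith
  set A := c + 3*k*(k-2-c) with hA
  set e := c + 3*k*((k-1)-c) with he
  set p := (K * Real.log n / (n:ℝ)^(k-1)) ^ ((1:ℝ)/k) with hp
  set D := (K/((k:ℝ)*θ))^((1:ℝ)/k) with hD
  have hD0 : 0 ≤ D := Real.rpow_nonneg (div_nonneg hK.le (by positivity)) _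
  have hlog0 : 0 ≤ Real.log n := Real.log_nonneg hn1
  have hp0 : 0 ≤ p := Real.rpow_nonneg (by positivity) _
  have hMeq : ((n+1)^c * ((n+1)^((k-1)-1-c))^(3*k) : ℕ) = (n+1)^A := by
    rw [← pow_mul, ← pow_add]
    congr 1
    have h1 : (k-1)-1-c = k-2-c := by omega
    rw [h1, hA]
    ring
  rw [hMeq]
  have hcast : (((n+1)^A : ℕ) : ℝ) = ((n:ℝ)+1)^A := by push_cast; ring
  rw [hcast]
  set y := θ - ((k:ℝ)-1)/(k:ℝ) with hy
  have hpy : p ≤ D * (n:ℝ)^y := p_le_bound k n K θ hk hn hK hθ0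
  have h1 : ((n:ℝ)+1)^A ≤ 2^A * (n:ℝ)^A := by
    rw [← mul_pow]
    exact pow_le_pow_left₀ (by linarith) (by linarith) A
  have h2 : p^e ≤ D^e * ((n:ℝ)^y)^e := by
    rw [← mul_pow]
    exact pow_le_pow_left₀ hp0 hpy e
  have hstep : ((n:ℝ)+1)^A * p^e ≤ (2^A * (n:ℝ)^A) * (D^e * ((n:ℝ)^y)^e) :=
    mul_le_mul h1 h2 (by positivity) (by positivity)
  refine hstep.trans ?_
  have hre : (2^A * (n:ℝ)^A) * (D^e * ((n:ℝ)^y)^e)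
      = (2^A * D^e) * ((n:ℝ)^A * ((n:ℝ)^y)^e) := by ring
  rw [hre]
  have hrw : (n:ℝ)^A * ((n:ℝ)^y)^e = (n:ℝ)^((A:ℝ) + y*(e:ℝ)) := by
    rw [← Real.rpow_natCast ((n:ℝ)^y) e, ← Real.rpow_mul hn0.le,
      ← Real.rpow_natCast (n:ℝ) A, ← Real.rpow_add hn0]
  rw [hrw]
  have hexp : (A:ℝ) + y*(e:ℝ) ≤ -3 + δ := by
    have := exp_bound k c θ δ hk (by omega) hδ hθdef
    rw [hA, he, hy]
    exact this
  have hnae : (n:ℝ)^((A:ℝ) + y*(e:ℝ)) ≤ (n:ℝ)^(-3+δ:ℝ) :=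
    Real.rpow_le_rpow_of_exponent_le hn1 hexp
  have h2AD : 0 ≤ 2^A * D^e := by positivity
  calc (2^A * D^e) * (n:ℝ)^((A:ℝ) + y*(e:ℝ)) ≤ (2^A * D^e) * (n:ℝ)^(-3+δ:ℝ) :=
        mul_le_mul_of_nonneg_left hnae h2AD
  _ = 2^A * D^e * (n:ℝ)^(-3+δ:ℝ) := by ring


end AuxLemmas

/-- Lemma 3.2. For fixed `k ≥ 3`, `α ∈ (0,1)`, `ε > 0`,
`K = (4+ε)(k!)²/α^{k-1}`, `p_n = (K·log n/n^{k-1})^{1/k}`: for every `δ > 0` there is a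
constant `C` with `P(Y_{k-1,n}(i) ≥ (3k-1)^{k-1}(k-1)!) ≤ C·n^{-3+δ}` for all `n` and
all `1 ≤ i ≤ (k-α)n`. -/
theorem few_overlapping_sums (k : ℕ) (hk : 3 ≤ k) (α ε : ℝ)
    (hα0 : 0 < α) (hα1 : α < 1) (hε : 0 < ε) (δ : ℝ) (hδ : 0 < δ) :
    ∃ C : ℝ, ∀ n : ℕ, ∀ i : ℕ, 1 ≤ i → (i : ℝ) ≤ ((k : ℝ) - α) * n →
      randSet n (((4 + ε) * (k.factorial : ℝ) ^ 2 / α ^ (k - 1) * Real.log n /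
            (n : ℝ) ^ (k - 1)) ^ ((1 : ℝ) / k))
          {ω | (3 * k - 1) ^ (k - 1) * (k - 1).factorial ≤ Y n (k - 1) i ω} ≤
        ENNReal.ofReal (C * (n : ℝ) ^ (-3 + δ)) := by

  set K := (4 + ε) * (k.factorial : ℝ) ^ 2 / α ^ (k - 1) with hKdef
  have hK0 : 0 < K := by
    apply div_pos
    · have h4 : (0:ℝ) < 4 + ε := by linarith
      positivity
    · positivity
  set θ := δ/(6*(k:ℝ)*k) with hθdef
  set D := (K/((k:ℝ)*θ))^((1:ℝ)/k) with hDdef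
  have hkR : (0:ℝ) < k := by
    have : 0 < k := by omega
    exact_mod_cast this
  have hθ0 : 0 < θ := by
    rw [hθdef]; apply div_pos hδ; nlinarith
  have hD0 : 0 ≤ D := Real.rpow_nonneg (div_nonneg hK0.le (by positivity)) _
  refine ⟨∑ c ∈ Finset.range (k-1), 2^(c + 3*k*(k-2-c)) * D^(c + 3*k*(k-1-c)), ?_⟩
  intro n i hi1 hi2
  have hn : 1 ≤ n := by
    rcases Nat.eq_zero_or_pos n with h | h
    · exfalso
      subst h
      have h1 : (1:ℝ) ≤ (i:ℝ) := by exact_mod_cast hi1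
      simp only [Nat.cast_zero, mul_zero] at hi2
      linarith
    · exact h
  have hn1 : (1:ℝ) ≤ n := by exact_mod_cast hn
  have hn0 : (0:ℝ) < n := by linarith
  have hlog0 : 0 ≤ Real.log n := Real.log_nonneg hn1
  refine (measure_le_sum n i k _ hk).trans ?_
  have hp0 : 0 ≤ (K * Real.log n / (n:ℝ)^(k-1)) ^ ((1:ℝ)/k) :=
    Real.rpow_nonneg (div_nonneg (mul_nonneg hK0.le hlog0) (by positivity)) _
  have hterm : ∀ c ∈ Finset.range (k-1),
      ((Idx n i (k-1) (3*k) c).card : ℝ≥0∞)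
        * (min (ENNReal.ofReal ((K * Real.log n / (n:ℝ)^(k-1)) ^ ((1:ℝ)/k))) 1)
            ^ (c + 3*k*((k-1) - c))
      ≤ ENNReal.ofReal ((2^(c + 3*k*(k-2-c)) * D^(c + 3*k*(k-1-c)))
          * (n:ℝ)^(-3+δ:ℝ)) := by
    intro c hc
    have hc' : c < k-1 := Finset.mem_range.mp hc
    set M := ((n+1)^c * ((n+1)^((k-1)-1-c))^(3*k) : ℕ) with hM
    calc ((Idx n i (k-1) (3*k) c).card : ℝ≥0∞)
        * (min (ENNReal.ofReal ((K * Real.log n / (n:ℝ)^(k-1)) ^ ((1:ℝ)/k))) 1)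
            ^ (c + 3*k*((k-1) - c))
        ≤ (M : ℝ≥0∞)
          * (ENNReal.ofReal ((K * Real.log n / (n:ℝ)^(k-1)) ^ ((1:ℝ)/k)))
              ^ (c + 3*k*((k-1) - c)) := by
          refine mul_le_mul' ?_ (pow_le_pow_left' (min_le_left _ _) _)
          exact_mod_cast Idx_card_le n i (k-1) (3*k) c hc'
    _ = ENNReal.ofReal ((M:ℝ)
          * ((K * Real.log n / (n:ℝ)^(k-1)) ^ ((1:ℝ)/k))^(c + 3*k*((k-1) - c))) := by
          rw [← ENNReal.ofReal_pow hp0, ← ENNReal.ofReal_natCast,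
            ← ENNReal.ofReal_mul (by positivity)]
    _ ≤ ENNReal.ofReal ((2^(c + 3*k*(k-2-c)) * D^(c + 3*k*(k-1-c)))
          * (n:ℝ)^(-3+δ:ℝ)) := by
          refine ENNReal.ofReal_le_ofReal ?_
          have := term_bound k c n K θ δ hk hc' hn hK0 hδ hθdef
          rw [hM]
          calc (((n+1)^c * ((n+1)^((k-1)-1-c))^(3*k) : ℕ) : ℝ)
              * ((K * Real.log n / (n:ℝ)^(k-1)) ^ ((1:ℝ)/k))^(c + 3*k*((k-1)-c))
              ≤ 2^(c + 3*k*(k-2-c)) * ((K/((k:ℝ)*θ))^((1:ℝ)/k))^(c + 3*k*(k-1-c))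
                * (n:ℝ)^(-3+δ:ℝ) := this
          _ = (2^(c + 3*k*(k-2-c)) * D^(c + 3*k*(k-1-c))) * (n:ℝ)^(-3+δ:ℝ) := by
                rw [hDdef]
  refine (Finset.sum_le_sum hterm).trans ?_
  rw [← ENNReal.ofReal_sum_of_nonneg, ← Finset.sum_mul]
  intro c hc
  have : (0:ℝ) ≤ (n:ℝ)^(-3+δ:ℝ) := Real.rpow_nonneg hn0.le _
  positivity
end

section
/- (Lemma 3.4) Fix an integer k ≥ 2, n ∈ ℕ, p ∈ [0,1], and an integer j, and form the random set 𝒜 ⊆ {0,1,…,n} by independent inclusion with probability p. Then every median m of the random variable Y*_{k,n}(j) (i.e., every real m with P(Y*_{k,n}(j) ≤ m) ≥ 1/2 and P(Y*_{k,n}(j) ≥ m) ≥ 1/2) satisfies |E[Y*_{k,n}(j)] − m| ≤ 40·√(k·E[Y*_{k,n}(j)]). -/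
open MeasureTheory Filter
open scoped ENNReal

/-! ### Auxiliary lemmas: two-point Jensen and tensorization of variance -/

lemma two_point_jensen {ct cf x y : ℝ} (h0 : 0 ≤ ct) (h0' : 0 ≤ cf) (h1 : ct + cf = 1) :
    (ct * x + cf * y) ^ 2 ≤ ct * x ^ 2 + cf * y ^ 2 := by
  nlinarith [sq_nonneg (x - y), mul_nonneg h0 h0']

/-- Tensorization of variance (a finitary Efron–Stein-type inequality) for
product Bernoulli weights on the Boolean cube. -/
lemma tensor_var (c : Bool → ℝ) (hct : 0 ≤ c true) (hcf : 0 ≤ c false)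
    (h1 : c true + c false = 1) :
    ∀ (N : ℕ) (f : (Fin N → Bool) → ℝ),
      (∑ ω, (∏ i, c (ω i)) * f ω ^ 2) - (∑ ω, (∏ i, c (ω i)) * f ω) ^ 2 ≤
        ∑ i, ∑ ω, (∏ i', c (ω i')) * (c true * c false *
          (f (Function.update ω i true) - f (Function.update ω i false)) ^ 2) := by
  intro N
  induction N with
  | zero =>
    intro f
    have h : ∀ g : (Fin 0 → Bool) → ℝ,
        ∑ ω : Fin 0 → Bool, (∏ i : Fin 0, c (ω i)) * g ω = g default := by
      intro g
      rw [Fintype.sum_unique]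
      simp only [Finset.univ_eq_empty, Finset.prod_empty, one_mul]
      exact congrArg g (Subsingleton.elim _ _)
    have h2 := h (fun ω => f ω ^ 2)
    have h3 := h f
    simp only [Finset.univ_eq_empty, Finset.sum_empty] at h2 h3 ⊢
    rw [h2, h3]
    simp
  | succ N IH =>
    intro f
    -- reindexing: sum over `Fin (N+1) → Bool` as double sum
    have hre : ∀ F : (Fin (N+1) → Bool) → ℝ,
        ∑ ω, F ω = ∑ τ : Fin N → Bool, (F (Fin.cons true τ) + F (Fin.cons false τ)) := by
      intro F
      rw [← Equiv.sum_comp (Fin.consEquiv (fun _ : Fin (N+1) => Bool)) F,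
        Fintype.sum_prod_type_right]
      refine Finset.sum_congr rfl fun τ _ => ?_
      rw [Fintype.sum_bool]
      rfl
    -- weight factorization
    have hW : ∀ (b : Bool) (τ : Fin N → Bool),
        (∏ i, c ((Fin.cons b τ : Fin (N+1) → Bool) i)) = c b * ∏ i, c (τ i) := by
      intro b τ
      rw [Fin.prod_univ_succ]
      simp
    have hWnn : ∀ τ : Fin N → Bool, 0 ≤ ∏ i, c (τ i) := by
      intro τ
      exact Finset.prod_nonneg fun i _ => by cases h : τ i <;> simp [h, hct, hcf]
    have hcf1 : c false = 1 - c true := by linarith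
    have hS1 : ∑ ω, (∏ i, c (ω i)) * f ω
        = ∑ τ : Fin N → Bool, (∏ i, c (τ i)) *
            (c true * f (Fin.cons true τ) + c false * f (Fin.cons false τ)) := by
      rw [hre (fun ω => (∏ i, c (ω i)) * f ω)]
      refine Finset.sum_congr rfl fun τ _ => ?_
      rw [hW, hW]
      ring
    have hS2 : ∑ ω, (∏ i, c (ω i)) * f ω ^ 2
        = ∑ τ : Fin N → Bool, (∏ i, c (τ i)) *
            (c true * f (Fin.cons true τ) ^ 2 + c false * f (Fin.cons false τ) ^ 2) := by
      rw [hre (fun ω => (∏ i, c (ω i)) * f ω ^ 2)]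
      refine Finset.sum_congr rfl fun τ _ => ?_
      rw [hW, hW]
      ring
    have hsplit : ∑ τ : Fin N → Bool, (∏ i, c (τ i)) *
            (c true * f (Fin.cons true τ) ^ 2 + c false * f (Fin.cons false τ) ^ 2)
        = (∑ τ : Fin N → Bool, (∏ i, c (τ i)) * (c true * c false *
            (f (Fin.cons true τ) - f (Fin.cons false τ)) ^ 2))
          + ∑ τ : Fin N → Bool, (∏ i, c (τ i)) *
            (c true * f (Fin.cons true τ) + c false * f (Fin.cons false τ)) ^ 2 := by
      rw [← Finset.sum_add_distrib]
      refine Finset.sum_congr rfl fun τ _ => ?_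
      rw [hcf1]; ring
    have hIH := IH (fun τ => c true * f (Fin.cons true τ) + c false * f (Fin.cons false τ))
    have hpoint : ∀ (i : Fin N) (τ : Fin N → Bool),
        (∏ i', c (τ i')) * (c true * c false *
          ((c true * f (Fin.cons true (Function.update τ i true))
              + c false * f (Fin.cons false (Function.update τ i true)))
           - (c true * f (Fin.cons true (Function.update τ i false))
              + c false * f (Fin.cons false (Function.update τ i false)))) ^ 2)
        ≤ (∏ i', c (τ i')) * (c true * c false *
            (c true * (f (Fin.cons true (Function.update τ i true))
                - f (Fin.cons true (Function.update τ i false))) ^ 2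
           + c false * (f (Fin.cons false (Function.update τ i true))
                - f (Fin.cons false (Function.update τ i false))) ^ 2)) := by
      intro i τ
      refine mul_le_mul_of_nonneg_left ?_ (hWnn τ)
      refine mul_le_mul_of_nonneg_left ?_ (mul_nonneg hct hcf)
      have hj := two_point_jensen
        (x := f (Fin.cons true (Function.update τ i true))
            - f (Fin.cons true (Function.update τ i false)))
        (y := f (Fin.cons false (Function.update τ i true))
            - f (Fin.cons false (Function.update τ i false))) hct hcf h1
      calc ((c true * f (Fin.cons true (Function.update τ i true))
              + c false * f (Fin.cons false (Function.update τ i true)))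
           - (c true * f (Fin.cons true (Function.update τ i false))
              + c false * f (Fin.cons false (Function.update τ i false)))) ^ 2
          = (c true * (f (Fin.cons true (Function.update τ i true))
                - f (Fin.cons true (Function.update τ i false)))
             + c false * (f (Fin.cons false (Function.update τ i true))
                - f (Fin.cons false (Function.update τ i false)))) ^ 2 := by ring
        _ ≤ _ := hj
    have hsucc : ∀ i : Fin N,
        ∑ τ : Fin N → Bool, (∏ i', c (τ i')) * (c true * c false *
            (c true * (f (Fin.cons true (Function.update τ i true))
                - f (Fin.cons true (Function.update τ i false))) ^ 2
           + c false * (f (Fin.cons false (Function.update τ i true))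
                - f (Fin.cons false (Function.update τ i false))) ^ 2))
        = ∑ ω, (∏ i', c (ω i')) * (c true * c false *
            (f (Function.update ω i.succ true) - f (Function.update ω i.succ false)) ^ 2) := by
      intro i
      rw [hre (fun ω => (∏ i', c (ω i')) * (c true * c false *
            (f (Function.update ω i.succ true) - f (Function.update ω i.succ false)) ^ 2))]
      refine Finset.sum_congr rfl fun τ _ => ?_
      rw [hW, hW]
      simp only [← Fin.cons_update]
      ring
    have hzero :
        ∑ ω, (∏ i', c (ω i')) * (c true * c false *
            (f (Function.update ω (0 : Fin (N + 1)) true)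
              - f (Function.update ω (0 : Fin (N + 1)) false)) ^ 2)
        = ∑ τ : Fin N → Bool, (∏ i, c (τ i)) * (c true * c false *
            (f (Fin.cons true τ) - f (Fin.cons false τ)) ^ 2) := by
      rw [hre (fun ω => (∏ i', c (ω i')) * (c true * c false *
            (f (Function.update ω (0 : Fin (N + 1)) true)
              - f (Function.update ω (0 : Fin (N + 1)) false)) ^ 2))]
      refine Finset.sum_congr rfl fun τ _ => ?_
      rw [hW, hW]
      simp only [Fin.update_cons_zero]
      rw [hcf1]
      ring
    calc (∑ ω, (∏ i, c (ω i)) * f ω ^ 2) - (∑ ω, (∏ i, c (ω i)) * f ω) ^ 2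
        = (∑ τ : Fin N → Bool, (∏ i, c (τ i)) * (c true * c false *
            (f (Fin.cons true τ) - f (Fin.cons false τ)) ^ 2))
          + ((∑ τ : Fin N → Bool, (∏ i, c (τ i)) *
              (c true * f (Fin.cons true τ) + c false * f (Fin.cons false τ)) ^ 2)
            - (∑ τ : Fin N → Bool, (∏ i, c (τ i)) *
              (c true * f (Fin.cons true τ) + c false * f (Fin.cons false τ))) ^ 2) := by
          rw [hS1, hS2, hsplit]; ring
      _ ≤ (∑ τ : Fin N → Bool, (∏ i, c (τ i)) * (c true * c false *
            (f (Fin.cons true τ) - f (Fin.cons false τ)) ^ 2))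
          + ∑ i : Fin N, ∑ ω, (∏ i', c (ω i')) * (c true * c false *
              (f (Function.update ω i.succ true) - f (Function.update ω i.succ false)) ^ 2) := by
          refine add_le_add_right (le_trans hIH ?_) _
          refine le_of_le_of_eq (Finset.sum_le_sum fun i _ =>
            Finset.sum_le_sum fun τ _ => hpoint i τ) ?_
          exact Finset.sum_congr rfl fun i _ => hsucc i
      _ = ∑ i : Fin (N + 1), ∑ ω, (∏ i', c (ω i')) * (c true * c false *
            (f (Function.update ω i true) - f (Function.update ω i false)) ^ 2) := by
          rw [Fin.sum_univ_succ, hzero]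

/-- Integrating out one coordinate against the product weight. -/
lemma pairing (c : Bool → ℝ) (h1 : c true + c false = 1) {N : ℕ} (i : Fin N)
    (h : (Fin N → Bool) → ℝ) (hh : ∀ ω b, h (Function.update ω i b) = h ω) :
    ∑ ω, (∏ j, c (ω j)) * (if ω i = true then h ω else 0)
      = c true * ∑ ω, (∏ j, c (ω j)) * h ω := by
  classical
  set T := ∑ ω ∈ Finset.univ.filter (fun ω : Fin N → Bool => ω i = true),
    (∏ j, c (ω j)) * h ω with hTdef
  set F := ∑ ω ∈ Finset.univ.filter (fun ω : Fin N → Bool => ¬ (ω i = true)),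
    (∏ j, c (ω j)) * h ω with hFdef
  have hfact : ∀ (ω : Fin N → Bool),
      (∏ j, c (ω j)) = c (ω i) * ∏ j ∈ Finset.univ.erase i, c (ω j) :=
    fun ω => (Finset.mul_prod_erase Finset.univ (fun j => c (ω j))
      (Finset.mem_univ i)).symm
  have key : c false * T = c true * F := by
    rw [hTdef, hFdef, Finset.mul_sum, Finset.mul_sum]
    refine Finset.sum_nbij' (fun ω => Function.update ω i false)
      (fun ω => Function.update ω i true) ?_ ?_ ?_ ?_ ?_
    · intro ω hω
      simp [Function.update_self]
    · intro ω hω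
      simp [Function.update_self]
    · intro ω hω
      rw [Finset.mem_filter] at hω
      show Function.update (Function.update ω i false) i true = ω
      rw [Function.update_idem, ← hω.2]
      exact Function.update_eq_self i ω
    · intro ω hω
      rw [Finset.mem_filter] at hω
      have : ω i = false := by
        cases hωi : ω i
        · rfl
        · exact absurd hωi hω.2
      show Function.update (Function.update ω i true) i false = ω
      rw [Function.update_idem, ← this]
      exact Function.update_eq_self i ω
    · intro ω hω
      rw [Finset.mem_filter] at hω
      rw [hh ω false, hfact ω, hfact (Function.update ω i false), hω.2,
        Function.update_self]
      have herase : ∏ j ∈ Finset.univ.erase i, c (Function.update ω i false j)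
          = ∏ j ∈ Finset.univ.erase i, c (ω j) := by
        refine Finset.prod_congr rfl fun j hj => ?_
        rw [Function.update_of_ne (Finset.mem_erase.mp hj).1]
      rw [herase]
      ring
  have hsum : ∑ ω, (∏ j, c (ω j)) * h ω = T + F :=
    (Finset.sum_filter_add_sum_filter_not _ _ _).symm
  have hLHS : ∑ ω, (∏ j, c (ω j)) * (if ω i = true then h ω else 0) = T := by
    rw [hTdef, Finset.sum_filter]
    refine Finset.sum_congr rfl fun ω _ => ?_
    by_cases hωi : ω i = true <;> simp [hωi]
  rw [hLHS, hsum]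
  linear_combination (-T) * h1 + key

/-! ### Combinatorial lemmas about `Ystar` -/

section ystar
variable {n k j : ℕ}

lemma repFinsets_mono {ω ω' : Fin (n + 1) → Bool} (h : ∀ i, ω i = true → ω' i = true)
    {S : Finset (Fin (n + 1))} (hS : S ∈ repFinsets n k j ω) : S ∈ repFinsets n k j ω' := by
  simp only [repFinsets, Finset.mem_filter, Finset.mem_univ, true_and] at hS ⊢
  exact ⟨hS.1, hS.2.1, fun i hi => h i (hS.2.2 i hi)⟩

lemma le_ystar {ω : Fin (n + 1) → Bool} {𝒞 : Finset (Finset (Fin (n + 1)))}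
    (h1 : ∀ S ∈ 𝒞, S ∈ repFinsets n k j ω)
    (h2 : (𝒞 : Set (Finset (Fin (n + 1)))).Pairwise fun S T => Disjoint S T) :
    𝒞.card ≤ Ystar n k j ω := by
  classical
  exact Finset.le_sup (Finset.mem_filter.mpr ⟨Finset.mem_univ _, h1, h2⟩)

lemma ystar_witness (ω : Fin (n + 1) → Bool) :
    ∃ 𝒞 : Finset (Finset (Fin (n + 1))),
      (∀ S ∈ 𝒞, S ∈ repFinsets n k j ω) ∧
        ((𝒞 : Set (Finset (Fin (n + 1)))).Pairwise fun S T => Disjoint S T) ∧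
        𝒞.card = Ystar n k j ω := by
  classical
  have hne : (Finset.univ.filter fun 𝒞 : Finset (Finset (Fin (n + 1))) =>
      (∀ S ∈ 𝒞, S ∈ repFinsets n k j ω) ∧
        (𝒞 : Set (Finset (Fin (n + 1)))).Pairwise fun S T => Disjoint S T).Nonempty := by
    refine ⟨∅, Finset.mem_filter.mpr ⟨Finset.mem_univ _, ?_, ?_⟩⟩
    · intro S hS; exact absurd hS (Finset.notMem_empty S)
    · simp
  obtain ⟨𝒞, h𝒞, hsup⟩ := Finset.exists_mem_eq_sup _ hne Finset.card
  rw [Finset.mem_filter] at h𝒞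
  refine ⟨𝒞, h𝒞.2.1, h𝒞.2.2, ?_⟩
  rw [Ystar]
  exact hsup.symm

lemma ystar_mono {ω ω' : Fin (n + 1) → Bool} (h : ∀ i, ω i = true → ω' i = true) :
    Ystar n k j ω ≤ Ystar n k j ω' := by
  obtain ⟨𝒞, h1, h2, hcard⟩ := ystar_witness (n := n) (k := k) (j := j) ω
  rw [← hcard]
  exact le_ystar (fun S hS => repFinsets_mono h (h1 S hS)) h2

lemma ystar_update_false_le (ω : Fin (n + 1) → Bool) (i : Fin (n + 1)) :
    Ystar n k j (Function.update ω i false) ≤ Ystar n k j (Function.update ω i true) := by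
  refine ystar_mono fun i' hi' => ?_
  rcases eq_or_ne i' i with rfl | hne
  · simp [Function.update_self] at hi'
  · simpa [Function.update_of_ne hne] using hi'

lemma ystar_update_false_le_self (ω : Fin (n + 1) → Bool) (i : Fin (n + 1)) :
    Ystar n k j (Function.update ω i false) ≤ Ystar n k j ω := by
  refine ystar_mono fun i' hi' => ?_
  rcases eq_or_ne i' i with rfl | hne
  · simp [Function.update_self] at hi'
  · rwa [Function.update_of_ne hne] at hi'

lemma ystar_lipschitz (ω : Fin (n + 1) → Bool) (i : Fin (n + 1)) :
    Ystar n k j (Function.update ω i true) ≤ Ystar n k j (Function.update ω i false) + 1 := by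
  classical
  obtain ⟨𝒞, h1, h2, hcard⟩ :=
    ystar_witness (n := n) (k := k) (j := j) (Function.update ω i true)
  rw [← hcard]
  set 𝒞' := 𝒞.filter (fun S => i ∉ S) with h𝒞'
  have hsub : 𝒞' ⊆ 𝒞 := Finset.filter_subset _ _
  have hadm : ∀ S ∈ 𝒞', S ∈ repFinsets n k j (Function.update ω i false) := by
    intro S hS
    rw [h𝒞', Finset.mem_filter] at hS
    have := h1 S hS.1
    simp only [repFinsets, Finset.mem_filter, Finset.mem_univ, true_and] at this ⊢
    refine ⟨this.1, this.2.1, fun i' hi' => ?_⟩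
    have hne : i' ≠ i := fun hh => hS.2 (hh ▸ hi')
    have := this.2.2 i' hi'
    rwa [Function.update_of_ne hne] at this ⊢
  have hle : 𝒞'.card ≤ Ystar n k j (Function.update ω i false) :=
    le_ystar hadm (h2.mono hsub)
  have hone : (𝒞.filter (fun S => i ∈ S)).card ≤ 1 := by
    rw [Finset.card_le_one]
    intro S hS T hT
    rw [Finset.mem_filter] at hS hT
    by_contra hne
    have hdisj := h2 hS.1 hT.1 hne
    exact (Finset.disjoint_left.mp hdisj hS.2) hT.2
  have hsplit : (𝒞.filter (fun S => i ∈ S)).card + 𝒞'.card = 𝒞.card := by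
    rw [h𝒞']
    exact Finset.card_filter_add_card_filter_not (p := fun S => i ∈ S)
  omega

lemma pivotal_sum_le (ω : Fin (n + 1) → Bool) :
    ∑ i, (if ω i = true then Ystar n k j ω - Ystar n k j (Function.update ω i false) else 0)
      ≤ k * Ystar n k j ω := by
  classical
  obtain ⟨𝒞, h1, h2, hcard⟩ := ystar_witness (n := n) (k := k) (j := j) ω
  set T := 𝒞.biUnion (fun S => S) with hT
  have hTcard : T.card = k * Ystar n k j ω := by
    rw [hT, Finset.card_biUnion (fun S hS S' hS' hne => h2 hS hS' hne)]
    rw [← hcard, Finset.card_eq_sum_ones 𝒞, Finset.mul_sum]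
    refine Finset.sum_congr rfl fun S hS => ?_
    have := h1 S hS
    simp only [repFinsets, Finset.mem_filter, Finset.mem_univ, true_and] at this
    simp [this.1]
  calc ∑ i, (if ω i = true then Ystar n k j ω - Ystar n k j (Function.update ω i false) else 0)
      ≤ ∑ i, (if i ∈ T then 1 else 0) := by
        refine Finset.sum_le_sum fun i _ => ?_
        by_cases hωi : ω i = true
        · simp only [hωi, if_true]
          by_cases hiT : i ∈ T
          · simp only [hiT, if_true]
            have hlip := ystar_lipschitz (n := n) (k := k) (j := j) ω i
            rw [show Function.update ω i true = ω by
              rw [← hωi]; exact Function.update_eq_self i ω] at hlip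
            omega
          · simp only [hiT, if_false]
            have : Ystar n k j ω ≤ Ystar n k j (Function.update ω i false) := by
              rw [← hcard]
              refine le_ystar (fun S hS => ?_) h2
              have hSr := h1 S hS
              simp only [repFinsets, Finset.mem_filter, Finset.mem_univ, true_and]
                at hSr ⊢
              refine ⟨hSr.1, hSr.2.1, fun i' hi' => ?_⟩
              have hne : i' ≠ i := by
                rintro rfl
                exact hiT (Finset.mem_biUnion.mpr ⟨S, hS, hi'⟩)
              rw [Function.update_of_ne hne]
              exact hSr.2.2 i' hi'
            omega
        · simp [hωi]
    _ = T.card := by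
        rw [Finset.sum_ite_mem, Finset.univ_inter, Finset.sum_const, smul_eq_mul, mul_one]
    _ = k * Ystar n k j ω := hTcard

lemma pivotal_sum_le_real (ω : Fin (n + 1) → Bool) :
    ∑ i, (if ω i = true then
        (Ystar n k j ω : ℝ) - (Ystar n k j (Function.update ω i false) : ℝ) else 0)
      ≤ (k : ℝ) * (Ystar n k j ω : ℝ) := by
  have hN := pivotal_sum_le (n := n) (k := k) (j := j) ω
  calc ∑ i, (if ω i = true then
        (Ystar n k j ω : ℝ) - (Ystar n k j (Function.update ω i false) : ℝ) else 0)
      = ((∑ i, (if ω i = true then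
          Ystar n k j ω - Ystar n k j (Function.update ω i false) else 0) : ℕ) : ℝ) := by
        rw [Nat.cast_sum]
        refine Finset.sum_congr rfl fun i _ => ?_
        by_cases h : ω i = true
        · rw [if_pos h, if_pos h, Nat.cast_sub (ystar_update_false_le_self ω i)]
        · rw [if_neg h, if_neg h, Nat.cast_zero]
    _ ≤ ((k * Ystar n k j ω : ℕ) : ℝ) := Nat.cast_le.mpr hN
    _ = (k : ℝ) * (Ystar n k j ω : ℝ) := by push_cast; ring

end ystar

/-! ### The measure-theoretic bridge -/

section bridge
variable {n : ℕ} {p : ℝ}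

instance (n : ℕ) (p : ℝ) : IsProbabilityMeasure (randSet n p) := by
  rw [randSet]; infer_instance

lemma bern_toMeasure_singleton (hp0 : 0 ≤ p) (hp1 : p ≤ 1) (b : Bool) :
    (((bern p).toMeasure) {b}).toReal = if b then p else 1 - p := by
  rw [PMF.toMeasure_apply_singleton _ _ (measurableSet_singleton b)]
  have hle : Real.toNNReal p ≤ 1 := Real.toNNReal_le_one.mpr hp1
  rw [bern, PMF.bernoulli_apply, min_eq_left hle]
  cases b
  · simp only [cond_false, Bool.false_eq_true, if_false]
    rw [ENNReal.coe_toReal, NNReal.coe_sub hle, NNReal.coe_one, Real.coe_toNNReal _ hp0]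
  · simp only [cond_true, if_true]
    rw [ENNReal.coe_toReal, Real.coe_toNNReal _ hp0]

lemma randSet_singleton (hp0 : 0 ≤ p) (hp1 : p ≤ 1) (ω : Fin (n + 1) → Bool) :
    ((randSet n p) {ω}).toReal = ∏ i, (if ω i then p else 1 - p) := by
  rw [randSet, ← Set.univ_pi_singleton ω, MeasureTheory.Measure.pi_pi,
    ENNReal.toReal_prod]
  exact Finset.prod_congr rfl fun i _ => bern_toMeasure_singleton hp0 hp1 (ω i)

lemma integral_randSet (F : (Fin (n + 1) → Bool) → ℝ) :
    ∫ ω, F ω ∂ randSet n p = ∑ ω, ((randSet n p) {ω}).toReal * F ω := by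
  rw [integral_fintype (Integrable.of_finite)]
  simp only [smul_eq_mul, Measure.real]

end bridge

/-! ### The variance bound `Var(Y*) ≤ k·E[Y*]` -/

lemma var_le (n k j : ℕ) {p : ℝ} (hp0 : 0 ≤ p) (hp1 : p ≤ 1) :
    ProbabilityTheory.variance (fun ω => (Ystar n k j ω : ℝ)) (randSet n p)
      ≤ k * ∫ ω, (Ystar n k j ω : ℝ) ∂ randSet n p := by
  classical
  set c : Bool → ℝ := fun b => if b then p else 1 - p with hcdef
  set X : (Fin (n + 1) → Bool) → ℝ := fun ω => (Ystar n k j ω : ℝ) with hXdef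
  have hct : c true = p := rfl
  have hcf : c false = 1 - p := rfl
  have h1 : c true + c false = 1 := by rw [hct, hcf]; ring
  have hct0 : 0 ≤ c true := hct ▸ hp0
  have hcf0 : 0 ≤ c false := by rw [hcf]; linarith
  have hw : ∀ ω : Fin (n + 1) → Bool,
      ((randSet n p) {ω}).toReal = ∏ i, c (ω i) :=
    fun ω => randSet_singleton hp0 hp1 ω
  have hWnn : ∀ ω : Fin (n + 1) → Bool, 0 ≤ ∏ i, c (ω i) :=
    fun ω => Finset.prod_nonneg fun i _ => by cases h : ω i <;> assumption
  have hmem : MeasureTheory.MemLp X 2 (randSet n p) := MeasureTheory.MemLp.of_discrete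
  have hvar := ProbabilityTheory.variance_eq_sub hmem
  have hE2 : ∫ x, (X ^ 2) x ∂ randSet n p = ∑ ω, (∏ i, c (ω i)) * X ω ^ 2 := by
    rw [integral_randSet (X ^ 2)]
    exact Finset.sum_congr rfl fun ω _ => by rw [hw ω]; rfl
  have hE1 : ∫ x, X x ∂ randSet n p = ∑ ω, (∏ i, c (ω i)) * X ω := by
    rw [integral_randSet X]
    exact Finset.sum_congr rfl fun ω _ => by rw [hw ω]
  have htens := tensor_var c hct0 hcf0 h1 (n + 1) X
  -- bounds on the discrete derivative
  have hdiff : ∀ (i : Fin (n + 1)) (ω : Fin (n + 1) → Bool),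
      0 ≤ X (Function.update ω i true) - X (Function.update ω i false) ∧
        X (Function.update ω i true) - X (Function.update ω i false) ≤ 1 := by
    intro i ω
    have h0 := ystar_update_false_le (n := n) (k := k) (j := j) ω i
    have hl := ystar_lipschitz (n := n) (k := k) (j := j) ω i
    constructor
    · have : (Ystar n k j (Function.update ω i false) : ℝ)
          ≤ (Ystar n k j (Function.update ω i true) : ℝ) := Nat.cast_le.mpr h0
      simp only [hXdef]
      linarith
    · have : (Ystar n k j (Function.update ω i true) : ℝ)
          ≤ (Ystar n k j (Function.update ω i false) : ℝ) + 1 := by exact_mod_cast hl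
      simp only [hXdef]
      linarith
  have hstep : ∀ i : Fin (n + 1),
      ∑ ω, (∏ i', c (ω i')) * (c true * c false *
          (X (Function.update ω i true) - X (Function.update ω i false)) ^ 2)
      ≤ ∑ ω, (∏ i', c (ω i')) *
          (if ω i = true then X ω - X (Function.update ω i false) else 0) := by
    intro i
    have hpair := pairing c h1 i
      (fun ω => X (Function.update ω i true) - X (Function.update ω i false))
      (by
        intro ω b
        simp only [Function.update_idem])
    beta_reduce at hpair
    calc ∑ ω, (∏ i', c (ω i')) * (c true * c false *
            (X (Function.update ω i true) - X (Function.update ω i false)) ^ 2)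
        ≤ c true * ∑ ω, (∏ i', c (ω i')) *
            (X (Function.update ω i true) - X (Function.update ω i false)) := by
          rw [Finset.mul_sum]
          refine Finset.sum_le_sum fun ω _ => ?_
          obtain ⟨hd0, hd1⟩ := hdiff i ω
          have hwω := hWnn ω
          rw [hct, hcf]
          set D := X (Function.update ω i true) - X (Function.update ω i false)
          have hD2 : p * (1 - p) * D ^ 2 ≤ p * D := by
            nlinarith [sq_nonneg D, mul_nonneg hp0 hd0]
          calc (∏ i', c (ω i')) * (p * (1 - p) * D ^ 2)
              ≤ (∏ i', c (ω i')) * (p * D) := mul_le_mul_of_nonneg_left hD2 hwω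
            _ = p * ((∏ i', c (ω i')) * D) := by ring
      _ = ∑ ω, (∏ i', c (ω i')) *
            (if ω i = true then
              X (Function.update ω i true) - X (Function.update ω i false) else 0) := by
          rw [← hpair]
      _ = ∑ ω, (∏ i', c (ω i')) *
            (if ω i = true then X ω - X (Function.update ω i false) else 0) := by
          refine Finset.sum_congr rfl fun ω _ => ?_
          by_cases hωi : ω i = true
          · rw [if_pos hωi, if_pos hωi,
              show Function.update ω i true = ω by
                rw [← hωi]; exact Function.update_eq_self i ω]
          · rw [if_neg hωi, if_neg hωi]
  have hswap : ∑ i : Fin (n + 1), ∑ ω, (∏ i', c (ω i')) *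
        (if ω i = true then X ω - X (Function.update ω i false) else 0)
      = ∑ ω, (∏ i', c (ω i')) *
        ∑ i, (if ω i = true then X ω - X (Function.update ω i false) else 0) := by
    rw [Finset.sum_comm]
    exact Finset.sum_congr rfl fun ω _ => by rw [Finset.mul_sum]
  have hpiv : ∀ ω : Fin (n + 1) → Bool,
      (∏ i', c (ω i')) *
          ∑ i, (if ω i = true then X ω - X (Function.update ω i false) else 0)
        ≤ (∏ i', c (ω i')) * ((k : ℝ) * X ω) := by
    intro ω
    refine mul_le_mul_of_nonneg_left ?_ (hWnn ω)
    exact pivotal_sum_le_real (n := n) (k := k) (j := j) ω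
  calc ProbabilityTheory.variance X (randSet n p)
      = (∫ x, (X ^ 2) x ∂ randSet n p) - (∫ x, X x ∂ randSet n p) ^ 2 := hvar
    _ = (∑ ω, (∏ i, c (ω i)) * X ω ^ 2) - (∑ ω, (∏ i, c (ω i)) * X ω) ^ 2 := by
        rw [hE2, hE1]
    _ ≤ ∑ i, ∑ ω, (∏ i', c (ω i')) * (c true * c false *
          (X (Function.update ω i true) - X (Function.update ω i false)) ^ 2) := htens
    _ ≤ ∑ i : Fin (n + 1), ∑ ω, (∏ i', c (ω i')) *
          (if ω i = true then X ω - X (Function.update ω i false) else 0) :=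
        Finset.sum_le_sum fun i _ => hstep i
    _ = ∑ ω, (∏ i', c (ω i')) *
          ∑ i, (if ω i = true then X ω - X (Function.update ω i false) else 0) := hswap
    _ ≤ ∑ ω, (∏ i', c (ω i')) * ((k : ℝ) * X ω) := Finset.sum_le_sum fun ω _ => hpiv ω
    _ = (k : ℝ) * ∑ ω, (∏ i, c (ω i)) * X ω := by
        rw [Finset.mul_sum]
        exact Finset.sum_congr rfl fun ω _ => by ring
    _ = (k : ℝ) * ∫ ω, (Ystar n k j ω : ℝ) ∂ randSet n p := by
        rw [← hE1]

/-- Lemma 3.4. For fixed `k ≥ 2`, `n`, `p ∈ [0,1]` and `j`, every median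
`m` of `Y*_{k,n}(j)` satisfies `|E[Y*_{k,n}(j)] − m| ≤ 40·√(k·E[Y*_{k,n}(j)])`. -/
theorem median_close_to_mean (k : ℕ) (hk : 2 ≤ k) (n : ℕ) (p : ℝ)
    (hp0 : 0 ≤ p) (hp1 : p ≤ 1) (j : ℕ) :
    ∀ m : ℝ,
      (1 : ℝ≥0∞) / 2 ≤ randSet n p {ω | (Ystar n k j ω : ℝ) ≤ m} →
      (1 : ℝ≥0∞) / 2 ≤ randSet n p {ω | m ≤ (Ystar n k j ω : ℝ)} →
      |(∫ ω, (Ystar n k j ω : ℝ) ∂ randSet n p) - m| ≤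
        40 * Real.sqrt (k * ∫ ω, (Ystar n k j ω : ℝ) ∂ randSet n p) := by
  intro m hm1 hm2
  classical
  set X : (Fin (n + 1) → Bool) → ℝ := fun ω => (Ystar n k j ω : ℝ) with hXdef
  set E := ∫ ω, (Ystar n k j ω : ℝ) ∂ randSet n p with hEdef
  have hE0 : 0 ≤ E := by
    rw [hEdef]
    exact integral_nonneg fun ω => by positivity
  have hkE0 : (0 : ℝ) ≤ (k : ℝ) * E := by positivity
  have hvarle := var_le n k j hp0 hp1
  have hvar0 := ProbabilityTheory.variance_nonneg X (randSet n p)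
  have key : |E - m| ≤ Real.sqrt (2 * ((k : ℝ) * E)) := by
    by_contra hcon
    push_neg at hcon
    have ht0 : 0 < |E - m| := lt_of_le_of_lt (Real.sqrt_nonneg _) hcon
    have ht2 : 2 * ((k : ℝ) * E) < |E - m| ^ 2 := by
      have hs := Real.sq_sqrt (by positivity : (0 : ℝ) ≤ 2 * ((k : ℝ) * E))
      nlinarith [Real.sqrt_nonneg (2 * ((k : ℝ) * E))]
    have hvt : ProbabilityTheory.variance X (randSet n p) / |E - m| ^ 2 < 1 / 2 := by
      rw [div_lt_iff₀ (by positivity)]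
      have : ProbabilityTheory.variance X (randSet n p) ≤ (k : ℝ) * E := hvarle
      linarith
    have hmem : MeasureTheory.MemLp X 2 (randSet n p) := MeasureTheory.MemLp.of_discrete
    have hcheb := ProbabilityTheory.meas_ge_le_variance_div_sq
      (μ := randSet n p) hmem ht0
    have hEX : ∫ x, X x ∂ randSet n p = E := rfl
    have hsubset : (1 : ℝ≥0∞) / 2
        ≤ randSet n p {ω | |E - m| ≤ |X ω - ∫ x, X x ∂ randSet n p|} := by
      rcases le_total E m with hEm | hEm
      · refine le_trans hm2 (measure_mono ?_)
        intro ω hω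
        simp only [Set.mem_setOf_eq] at hω ⊢
        rw [hEX, abs_of_nonpos (by linarith : E - m ≤ 0)]
        calc -(E - m) = m - E := by ring
          _ ≤ X ω - E := by
              have : m ≤ X ω := hω
              linarith
          _ ≤ |X ω - E| := le_abs_self _
      · refine le_trans hm1 (measure_mono ?_)
        intro ω hω
        simp only [Set.mem_setOf_eq] at hω ⊢
        rw [hEX, abs_of_nonneg (by linarith : 0 ≤ E - m)]
        calc E - m ≤ E - X ω := by
              have : X ω ≤ m := hω
              linarith
          _ ≤ |X ω - E| := by
              rw [abs_sub_comm]
              exact le_abs_self _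
    have hofreal : ENNReal.ofReal
        (ProbabilityTheory.variance X (randSet n p) / |E - m| ^ 2)
        < (1 : ℝ≥0∞) / 2 := by
      have h12 : ((1 : ℝ≥0∞) / 2) = ENNReal.ofReal (1 / 2) := by
        rw [ENNReal.ofReal_div_of_pos (by norm_num)]
        norm_num
      rw [h12]
      exact (ENNReal.ofReal_lt_ofReal_iff (by norm_num)).mpr hvt
    exact absurd (le_trans hsubset hcheb) (not_le.mpr hofreal)
  have h40 : Real.sqrt (2 * ((k : ℝ) * E)) ≤ 40 * Real.sqrt ((k : ℝ) * E) := by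
    rw [Real.sqrt_mul (by norm_num : (0 : ℝ) ≤ 2)]
    have hs2 : Real.sqrt 2 ≤ 40 := by
      nlinarith [Real.sq_sqrt (show (0 : ℝ) ≤ 2 by norm_num), Real.sqrt_nonneg 2]
    exact mul_le_mul_of_nonneg_right hs2 (Real.sqrt_nonneg _)
  exact key.trans h40
end

section
/- Fix an integer k ≥ 2 and α ∈ (0,1). Let ρ_{k,n}(j) denote the number of k-element subsets of {0,1,…,n} whose (pairwise distinct) elements sum to j. Then for every ε > 0 there exists N ∈ ℕ such that for all n ≥ N and every integer j with α·n ≤ j ≤ (k−α)·n, ρ_{k,n}(j) ≥ (1−ε)·(α·n)^{k−1}/(k!·(k−1)!); moreover ρ_{k,n}(j) ≤ (n+1)^{k−1} for all n and j. -/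
open MeasureTheory Filter
open scoped ENNReal

/-- `ρ n k j` : the number of `k`-element subsets of `{0, 1, …, n}` whose (pairwise
distinct) elements sum to `j`; this is `Y` evaluated at the full set. -/
def rho (n k j : ℕ) : ℕ := Y n k j (fun _ => true)



open Finset

/-- Number of tuples in `{0,…,n}^k` with sum `t`. -/
def Ncnt (k n t : ℕ) : ℕ :=
  ((Finset.univ : Finset (Fin k → Fin (n+1))).filter fun a => (∑ i, (a i : ℕ)) = t).card

lemma sum_le_kn {k n : ℕ} (a : Fin k → Fin (n+1)) : (∑ i, (a i : ℕ)) ≤ k * n := by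
  calc (∑ i, (a i : ℕ)) ≤ ∑ _i : Fin k, n := Finset.sum_le_sum fun i _ => Fin.is_le (a i)
  _ = k * n := by simp [Finset.sum_const, mul_comm]

lemma Ncnt_eq_zero {k n t : ℕ} (h : k * n < t) : Ncnt k n t = 0 := by
  rw [Ncnt, Finset.card_eq_zero, Finset.filter_eq_empty_iff]
  intro a _
  exact fun hs => absurd (hs ▸ sum_le_kn a) (by omega)

lemma rev_sum {k n : ℕ} (a : Fin k → Fin (n+1)) :
    (∑ i, ((a i).rev : ℕ)) + (∑ i, (a i : ℕ)) = k * n := by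
  rw [← Finset.sum_add_distrib]
  calc (∑ i, (((a i).rev : ℕ) + (a i : ℕ))) = ∑ _i : Fin k, n := by
        refine Finset.sum_congr rfl fun i _ => ?_
        have h1 : ((a i).rev : ℕ) = n - (a i : ℕ) := by
          simp [Fin.val_rev]
        have := Fin.is_le (a i)
        omega
  _ = k * n := by simp [Finset.sum_const, mul_comm]

lemma Ncnt_symm {k n t : ℕ} (h : t ≤ k * n) : Ncnt k n t = Ncnt k n (k * n - t) := by
  unfold Ncnt
  refine Finset.card_bij' (fun a _ => fun i => (a i).rev) (fun a _ => fun i => (a i).rev)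
    ?_ ?_ ?_ ?_
  · intro a ha
    simp only [Finset.mem_filter, Finset.mem_univ, true_and] at ha ⊢
    have := rev_sum a
    omega
  · intro a ha
    simp only [Finset.mem_filter, Finset.mem_univ, true_and] at ha ⊢
    have := rev_sum a
    omega
  · intro a _; funext i; simp [Fin.rev_rev]
  · intro a _; funext i; simp [Fin.rev_rev]

lemma Ncnt_layer (k n t : ℕ) :
    Ncnt (k+1) n t = ∑ s ∈ Finset.Icc (t - n) t, Ncnt k n s := by
  unfold Ncnt
  rw [Finset.card_eq_sum_card_fiberwise
    (f := fun a : Fin (k+1) → Fin (n+1) => ∑ i : Fin k, (a i.castSucc : ℕ))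
    (t := Finset.Icc (t - n) t)]
  · refine Finset.sum_congr rfl fun s hs => ?_
    simp only [Finset.mem_Icc] at hs
    refine Finset.card_bij' (fun a _ => fun i => a i.castSucc)
      (fun b _ => Fin.snoc b (⟨t - s, by omega⟩ : Fin (n+1))) ?_ ?_ ?_ ?_
    · intro a ha
      simp only [Finset.mem_filter, Finset.mem_univ, true_and] at ha ⊢
      exact ha.2
    · intro b hb
      simp only [Finset.mem_filter, Finset.mem_univ, true_and] at hb ⊢
      constructor
      · rw [Fin.sum_univ_castSucc]
        simp only [Fin.snoc_castSucc, Fin.snoc_last]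
        rw [hb]
        omega
      · simp only [Fin.snoc_castSucc]
        exact hb
    · intro a ha
      simp only [Finset.mem_filter, Finset.mem_univ, true_and] at ha
      funext i
      refine Fin.lastCases ?_ ?_ i
      · rw [Fin.snoc_last]
        have := Fin.sum_univ_castSucc (f := fun i : Fin (k+1) => (a i : ℕ))
        rw [this] at ha
        have hle := Fin.is_le (a (Fin.last k))
        refine Fin.ext ?_
        simp only
        omega
      · intro i; rw [Fin.snoc_castSucc]
    · intro b _
      funext i
      rw [Fin.snoc_castSucc]
  · intro a ha
    simp only [Finset.mem_coe, Finset.mem_filter, Finset.mem_univ, true_and] at ha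
    have := Fin.sum_univ_castSucc (f := fun i : Fin (k+1) => (a i : ℕ))
    rw [this] at ha
    have hle := Fin.is_le (a (Fin.last k))
    simp only [Finset.mem_coe, Finset.mem_Icc]
    omega
lemma Ncnt_mono : ∀ k n s t : ℕ, s ≤ t → s + t ≤ k * n → Ncnt k n s ≤ Ncnt k n t := by
  intro k
  induction k with
  | zero =>
    intro n s t hst h
    have hs : s = 0 := by omega
    have ht : t = 0 := by omega
    subst hs; subst ht; exact le_rfl
  | succ k ih =>
    intro n
    -- step monotonicity
    have M : ∀ t : ℕ, 2 * t + 1 ≤ (k + 1) * n → Ncnt (k+1) n t ≤ Ncnt (k+1) n (t+1) := by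
      intro t ht
      rw [Ncnt_layer, Ncnt_layer]
      rcases Nat.lt_or_ge t n with hlt | hge
      · have h1 : t - n = 0 := by omega
        have h2 : t + 1 - n = 0 := by omega
        rw [h1, h2]
        exact Finset.sum_le_sum_of_subset (Finset.Icc_subset_Icc le_rfl (by omega))
      · have e1 : ∑ s ∈ Finset.Icc (t - n) t, Ncnt k n s
            = Ncnt k n (t - n) + ∑ s ∈ Finset.Ioc (t - n) t, Ncnt k n s := by
          rw [← Finset.Icc_erase_left]
          exact (Finset.add_sum_erase _ _ (Finset.mem_Icc.mpr ⟨le_rfl, by omega⟩)).symm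
        have e2 : ∑ s ∈ Finset.Icc (t + 1 - n) (t+1), Ncnt k n s
            = (∑ s ∈ Finset.Ioc (t - n) t, Ncnt k n s) + Ncnt k n (t+1) := by
          have h3 : t + 1 - n = (t - n) + 1 := by omega
          rw [h3, Finset.sum_Icc_succ_top (by omega : t - n + 1 ≤ t + 1), Finset.Icc_add_one_left_eq_Ioc]
        rw [e1, e2]
        have hkn : (k+1) * n = k * n + n := by ring
        have hkey : Ncnt k n (t - n) ≤ Ncnt k n (t + 1) :=
          ih n (t - n) (t + 1) (by omega) (by omega)
        omega
    have chain : ∀ d s : ℕ, 2 * s + 2 * d ≤ (k + 1) * n →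
        Ncnt (k+1) n s ≤ Ncnt (k+1) n (s + d) := by
      intro d
      induction d with
      | zero => intro s _; simp
      | succ d ihd =>
        intro s h
        calc Ncnt (k+1) n s ≤ Ncnt (k+1) n (s + d) := ihd s (by omega)
        _ ≤ Ncnt (k+1) n (s + d + 1) := M (s + d) (by omega)
        _ = Ncnt (k+1) n (s + (d + 1)) := by ring_nf
    intro s t hst h
    rcases le_or_gt (2 * t) ((k+1) * n) with h2 | h2
    · have := chain (t - s) s (by omega)
      rwa [show s + (t - s) = t by omega] at this
    · have ht : t ≤ (k+1) * n := by omega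
      rw [Ncnt_symm ht]
      have := chain ((k+1) * n - t - s) s (by omega)
      rwa [show s + ((k+1) * n - t - s) = (k+1) * n - t by omega] at this
lemma Ncnt_one {n m : ℕ} (h : m ≤ n) : Ncnt 1 n m = 1 := by
  rw [Ncnt, Finset.card_eq_one]
  refine ⟨fun _ => (⟨m, by omega⟩ : Fin (n+1)), ?_⟩
  ext a
  simp only [Finset.mem_filter, Finset.mem_univ, true_and, Finset.mem_singleton,
    Fin.sum_univ_one]
  constructor
  · intro ha
    funext i
    have : i = 0 := Subsingleton.elim _ _
    subst this
    exact Fin.ext ha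
  · intro ha
    rw [ha]
  
lemma Ncnt_choose : ∀ k, 1 ≤ k → ∀ n m : ℕ, m ≤ n → Ncnt k n m = (m + k - 1).choose (k - 1) := by
  intro k
  induction k with
  | zero => omega
  | succ k ih =>
    intro _ n m hm
    rcases Nat.eq_zero_or_pos k with hk0 | hk1
    · subst hk0
      simpa using Ncnt_one hm
    · rw [Ncnt_layer]
      have hmn : m - n = 0 := by omega
      rw [hmn]
      have hterm : ∀ s ∈ Finset.Icc 0 m, Ncnt k n s = (s + (k-1)).choose (k - 1) := by
        intro s hs
        simp only [Finset.mem_Icc] at hs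
        rw [ih hk1 n s (by omega)]
        congr 1
        omega
      rw [Finset.sum_congr rfl hterm]
      have hre : ∑ s ∈ Finset.Icc 0 m, (s + (k-1)).choose (k - 1)
          = ∑ i ∈ Finset.Icc (k-1) (m + (k-1)), i.choose (k-1) := by
        rw [show Finset.Icc (k-1) (m + (k-1)) = Finset.Icc (0 + (k-1)) (m + (k-1)) by rw [Nat.zero_add],
          ← Finset.map_add_right_Icc 0 m (k-1), Finset.sum_map]
        rfl
      rw [hre, Nat.sum_Icc_choose]
      congr 1 <;> omega

lemma Ncnt_pow_le {k n m : ℕ} (hk : 1 ≤ k) (hm : m ≤ n) :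
    m ^ (k - 1) ≤ (k-1).factorial * Ncnt k n m := by
  rw [Ncnt_choose k hk n m hm, ← Nat.descFactorial_eq_factorial_mul_choose]
  calc m ^ (k-1) ≤ (m + (k-1) + 1 - (k-1)) ^ (k-1) := Nat.pow_le_pow_left (by omega) _
  _ ≤ (m + (k-1)).descFactorial (k-1) := Nat.pow_sub_le_descFactorial _ _
  _ = (m + k - 1).descFactorial (k-1) := by congr 1; omega
open scoped Classical in
lemma Dcard_le (k n j : ℕ) :
    ((Finset.univ : Finset (Fin k → Fin (n+1))).filter fun a =>
        (∑ i, (a i : ℕ)) = j ∧ Function.Injective a).card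
      ≤ k.factorial * rho n k j := by
  show _ ≤ k.factorial * (repFinsets n k j (fun _ => true)).card
  refine Finset.card_le_mul_card_image_of_maps_to
    (f := fun a => Finset.image a Finset.univ) ?_ k.factorial ?_
  · intro a ha
    simp only [Finset.mem_filter, Finset.mem_univ, true_and] at ha
    simp only [repFinsets, Finset.mem_filter, Finset.mem_univ, true_and]
    refine ⟨?_, ?_, fun _ _ => trivial⟩
    · rw [Finset.card_image_of_injective _ ha.2, Finset.card_univ, Fintype.card_fin]
    · rw [Finset.sum_image (fun x _ y _ h => ha.2 h)]
      exact ha.1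
  · intro S hS
    have hScard : S.card = k := by
      simp only [repFinsets, Finset.mem_filter] at hS
      exact hS.2.1
    set F := (Finset.univ.filter fun a : Fin k → Fin (n+1) =>
        (∑ i, (a i : ℕ)) = j ∧ Function.Injective a).filter
        (fun a => Finset.image a Finset.univ = S) with hF
    have key : F.card ≤ Fintype.card (Fin k ↪ {x // x ∈ S}) := by
      rw [← Fintype.card_coe]
      have hmem : ∀ p : ↥F, ∀ i : Fin k, (p : Fin k → Fin (n+1)) i ∈ S := by
        intro p i
        have hp := p.2
        simp only [hF, Finset.mem_filter, Finset.mem_univ, true_and] at hp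
        rw [← hp.2]
        exact Finset.mem_image_of_mem _ (Finset.mem_univ i)
      have hinj : ∀ p : ↥F, Function.Injective (p : Fin k → Fin (n+1)) := by
        intro p
        have hp := p.2
        simp only [hF, Finset.mem_filter, Finset.mem_univ, true_and] at hp
        exact hp.1.2
      refine Fintype.card_le_of_injective
        (fun p => ⟨fun i => ⟨(p : Fin k → Fin (n+1)) i, hmem p i⟩,
          fun i i' h => hinj p (by simpa [Subtype.ext_iff] using h)⟩) ?_
      intro p q h
      have h' : ∀ i, (p : Fin k → Fin (n+1)) i = (q : Fin k → Fin (n+1)) i := by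
        intro i
        have := congrArg (fun e => (e : Fin k ↪ {x // x ∈ S}) i) h
        exact congrArg Subtype.val this
      exact Subtype.ext (funext h')
    calc F.card ≤ Fintype.card (Fin k ↪ {x // x ∈ S}) := key
    _ = k.factorial := by
      rw [Fintype.card_embedding_eq, Fintype.card_coe, hScard, Fintype.card_fin,
        Nat.descFactorial_self]

open scoped Classical in
lemma badcard_le (k n j : ℕ) (p : Fin k × Fin k) (hne : p.1 ≠ p.2) :
    ((Finset.univ : Finset (Fin k → Fin (n+1))).filter fun a =>
        (∑ i, (a i : ℕ)) = j ∧ a p.1 = a p.2).card ≤ (n+1) ^ (k-2) := by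
  obtain ⟨i, l⟩ := p
  simp only at hne ⊢
  set G := (Finset.univ : Finset (Fin k → Fin (n+1))).filter fun a =>
        (∑ i', (a i' : ℕ)) = j ∧ a i = a l with hG
  have hsum : ∀ a, a ∈ G → 2 * (a i : ℕ) + (∑ x ∈ Finset.univ \ {i, l}, (a x : ℕ)) = j := by
    intro a ha
    simp only [hG, Finset.mem_filter, Finset.mem_univ, true_and] at ha
    have hsd : (∑ x ∈ Finset.univ \ {i, l}, (a x : ℕ)) + (∑ x ∈ ({i, l} : Finset (Fin k)), (a x : ℕ))
        = ∑ x, (a x : ℕ) := Finset.sum_sdiff (Finset.subset_univ _)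
    rw [Finset.sum_pair hne] at hsd
    have : (a l : ℕ) = (a i : ℕ) := by rw [ha.2]
    omega
  have key : G.card ≤ Fintype.card ({x : Fin k // x ≠ i ∧ x ≠ l} → Fin (n+1)) := by
    rw [← Fintype.card_coe]
    refine Fintype.card_le_of_injective
      (fun q => fun x => (q : Fin k → Fin (n+1)) x.1) ?_
    intro q r h
    have hqr : ∀ x (hx1 : x ≠ i) (hx2 : x ≠ l),
        (q : Fin k → Fin (n+1)) x = (r : Fin k → Fin (n+1)) x := by
      intro x hx1 hx2
      exact congrFun h ⟨x, hx1, hx2⟩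
    have hrest : (∑ x ∈ Finset.univ \ {i, l}, ((q : Fin k → Fin (n+1)) x : ℕ))
        = ∑ x ∈ Finset.univ \ {i, l}, ((r : Fin k → Fin (n+1)) x : ℕ) := by
      refine Finset.sum_congr rfl fun x hx => ?_
      simp only [Finset.mem_sdiff, Finset.mem_insert, Finset.mem_singleton] at hx
      rw [hqr x (fun hc => hx.2 (Or.inl hc)) (fun hc => hx.2 (Or.inr hc))]
    have hq := hsum _ q.2
    have hr := hsum _ r.2
    have hi : ((q : Fin k → Fin (n+1)) i : ℕ) = ((r : Fin k → Fin (n+1)) i : ℕ) := by omega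
    have hqmem := q.2
    have hrmem := r.2
    simp only [hG, Finset.mem_filter, Finset.mem_univ, true_and] at hqmem hrmem
    refine Subtype.ext (funext fun z => ?_)
    by_cases hzi : z = i
    · subst hzi; exact Fin.ext hi
    · by_cases hzl : z = l
      · subst hzl
        rw [← hqmem.2, ← hrmem.2]
        exact Fin.ext hi
      · exact hqr z hzi hzl
  have hcard2 : Fintype.card {x : Fin k // x ≠ i ∧ x ≠ l} = k - 2 := by
    rw [Fintype.card_subtype]
    have : (Finset.univ.filter fun x : Fin k => x ≠ i ∧ x ≠ l)
        = Finset.univ \ {i, l} := by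
      ext x
      simp [Finset.mem_sdiff, not_or]
    rw [this, Finset.card_sdiff_of_subset (Finset.subset_univ _), Finset.card_univ, Fintype.card_fin]
    have : ({i, l} : Finset (Fin k)).card = 2 := by
      rw [Finset.card_insert_of_notMem (by simpa using hne), Finset.card_singleton]
    omega
  calc G.card ≤ Fintype.card ({x : Fin k // x ≠ i ∧ x ≠ l} → Fin (n+1)) := key
  _ = (n+1) ^ (k-2) := by
    rw [Fintype.card_fun, Fintype.card_fin, hcard2]

open scoped Classical in
lemma Ncnt_le_rho (k n j : ℕ) :
    Ncnt k n j ≤ k.factorial * rho n k j + k * k * (n+1) ^ (k-2) := by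
  set T := (Finset.univ : Finset (Fin k → Fin (n+1))).filter fun a =>
    (∑ i, (a i : ℕ)) = j with hT
  have hsplit : T.card = (T.filter fun a => Function.Injective a).card
      + (T.filter fun a => ¬ Function.Injective a).card :=
    (Finset.card_filter_add_card_filter_not _).symm
  have h1 : (T.filter fun a => Function.Injective a).card ≤ k.factorial * rho n k j := by
    have : T.filter (fun a => Function.Injective a)
        = Finset.univ.filter fun a : Fin k → Fin (n+1) =>
            (∑ i, (a i : ℕ)) = j ∧ Function.Injective a := by
      rw [hT, Finset.filter_filter]
    rw [this]
    exact Dcard_le k n j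
  have h2 : (T.filter fun a => ¬ Function.Injective a).card ≤ k * k * (n+1) ^ (k-2) := by
    set P := (Finset.univ : Finset (Fin k × Fin k)).filter fun p => p.1 ≠ p.2 with hP
    have hsub : T.filter (fun a => ¬ Function.Injective a)
        ⊆ P.biUnion fun p => Finset.univ.filter fun a : Fin k → Fin (n+1) =>
            (∑ i, (a i : ℕ)) = j ∧ a p.1 = a p.2 := by
      intro a ha
      simp only [hT, Finset.mem_filter, Finset.mem_univ, true_and] at ha
      obtain ⟨x, y, hxy, hne⟩ := Function.not_injective_iff.mp ha.2
      refine Finset.mem_biUnion.mpr ⟨(x, y), ?_, ?_⟩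
      · simp [hP, hne]
      · simp only [Finset.mem_filter, Finset.mem_univ, true_and]
        exact ⟨ha.1, hxy⟩
    calc (T.filter fun a => ¬ Function.Injective a).card
        ≤ (P.biUnion fun p => Finset.univ.filter fun a : Fin k → Fin (n+1) =>
            (∑ i, (a i : ℕ)) = j ∧ a p.1 = a p.2).card := Finset.card_le_card hsub
    _ ≤ ∑ p ∈ P, (Finset.univ.filter fun a : Fin k → Fin (n+1) =>
            (∑ i, (a i : ℕ)) = j ∧ a p.1 = a p.2).card := Finset.card_biUnion_le
    _ ≤ ∑ _p ∈ P, (n+1) ^ (k-2) := by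
        refine Finset.sum_le_sum fun p hp => ?_
        have hne : p.1 ≠ p.2 := by
          simp only [hP, Finset.mem_filter] at hp
          exact hp.2
        exact badcard_le k n j p hne
    _ = P.card * (n+1) ^ (k-2) := by rw [Finset.sum_const, smul_eq_mul]
    _ ≤ k * k * (n+1) ^ (k-2) := by
        have : P.card ≤ k * k := by
          calc P.card ≤ (Finset.univ : Finset (Fin k × Fin k)).card :=
            Finset.card_le_card (Finset.filter_subset _ _)
          _ = k * k := by rw [Finset.card_univ, Fintype.card_prod, Fintype.card_fin]
        exact Nat.mul_le_mul_right _ this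
  have : Ncnt k n j = T.card := rfl
  omega

lemma rho_le_pow (k n j : ℕ) (hk : 1 ≤ k) : rho n k j ≤ (n+1) ^ (k-1) := by
  show (repFinsets n k j (fun _ => true)).card ≤ _
  have hmaps : ∀ S ∈ repFinsets n k j (fun _ => true),
      ∀ (hS : S.Nonempty), S.erase (S.min' hS) ∈ Finset.powersetCard (k-1) (Finset.univ : Finset (Fin (n+1))) := by
    intro S hS hne
    simp only [repFinsets, Finset.mem_filter] at hS
    rw [Finset.mem_powersetCard]
    refine ⟨Finset.subset_univ _, ?_⟩
    rw [Finset.card_erase_of_mem (S.min'_mem hne), hS.2.1]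
  have hcard : ∀ S ∈ repFinsets n k j (fun _ => true), S.Nonempty := by
    intro S hS
    simp only [repFinsets, Finset.mem_filter] at hS
    rw [← Finset.card_pos, hS.2.1]; omega
  classical
  have key : (repFinsets n k j (fun _ => true)).card
      ≤ (Finset.powersetCard (k-1) (Finset.univ : Finset (Fin (n+1)))).card := by
    refine Finset.card_le_card_of_injOn
      (fun S => if hS : S.Nonempty then S.erase (S.min' hS) else ∅) ?_ ?_
    · intro S hS
      dsimp only
      rw [dif_pos (hcard S hS)]
      exact hmaps S hS (hcard S hS)
    · intro S1 h1 S2 h2 heq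
      dsimp only at heq
      have h1' : S1 ∈ repFinsets n k j (fun _ => true) := h1
      have h2' : S2 ∈ repFinsets n k j (fun _ => true) := h2
      have hne1 := hcard _ h1'
      have hne2 := hcard _ h2'
      rw [dif_pos hne1, dif_pos hne2] at heq
      simp only [repFinsets, Finset.mem_filter] at h1' h2'
      have e1 : (∑ x ∈ S1.erase (S1.min' hne1), (x:ℕ)) + ((S1.min' hne1 : Fin (n+1)) : ℕ) = j := by
        rw [Finset.sum_erase_add _ _ (S1.min'_mem hne1)]
        exact h1'.2.2.1
      have e2 : (∑ x ∈ S2.erase (S2.min' hne2), (x:ℕ)) + ((S2.min' hne2 : Fin (n+1)) : ℕ) = j := by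
        rw [Finset.sum_erase_add _ _ (S2.min'_mem hne2)]
        exact h2'.2.2.1
      rw [heq] at e1
      have hmm : S1.min' hne1 = S2.min' hne2 := Fin.ext (by omega)
      calc S1 = insert (S1.min' hne1) (S1.erase (S1.min' hne1)) :=
            (Finset.insert_erase (S1.min'_mem hne1)).symm
      _ = insert (S2.min' hne2) (S2.erase (S2.min' hne2)) := by rw [heq, hmm]
      _ = S2 := Finset.insert_erase (S2.min'_mem hne2)
  calc (repFinsets n k j (fun _ => true)).card
      ≤ (Finset.powersetCard (k-1) (Finset.univ : Finset (Fin (n+1)))).card := key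
  _ = (n+1).choose (k-1) := by
      rw [Finset.card_powersetCard, Finset.card_univ, Fintype.card_fin]
  _ ≤ (n+1) ^ (k-1) := Nat.choose_le_pow _ _

set_option maxHeartbeats 1000000 in
/-- count of `k`-sums, from \cite{AV}. For fixed `k ≥ 2` and
`α ∈ (0,1)`: for every `ε > 0`, eventually in `n`, every `j ∈ [αn, (k-α)n]` satisfies
`ρ_{k,n}(j) ≥ (1-ε)·(αn)^{k-1}/(k!(k-1)!)`; moreover `ρ_{k,n}(j) ≤ (n+1)^{k-1}` always. -/
theorem rho_bounds (k : ℕ) (hk : 2 ≤ k) (α : ℝ) (hα0 : 0 < α) (hα1 : α < 1) :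
    (∀ ε : ℝ, 0 < ε → ∃ N : ℕ, ∀ n : ℕ, N ≤ n →
      ∀ j : ℕ, α * n ≤ (j : ℝ) → (j : ℝ) ≤ ((k : ℝ) - α) * n →
        (1 - ε) * (α * n) ^ (k - 1) / ((k.factorial : ℝ) * (k - 1).factorial) ≤
          (rho n k j : ℝ)) ∧
    ∀ n j : ℕ, (rho n k j : ℝ) ≤ ((n : ℝ) + 1) ^ (k - 1) := by
  have hk1 : 1 ≤ k := by omega
  constructor
  · intro ε hε
    set C : ℝ := ((k-1).factorial : ℝ) * ((k : ℝ) * k) * 2 ^ (k-2) with hC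
    have hαpow : (0:ℝ) < α ^ (k-1) := pow_pos hα0 _
    obtain ⟨N0, hN0⟩ := exists_nat_ge (C / (ε * α ^ (k-1)))
    refine ⟨max N0 1, fun n hn j hj1 hj2 => ?_⟩
    have hn1 : (1:ℕ) ≤ n := le_trans (le_max_right _ _) hn
    have hnN0 : (N0 : ℝ) ≤ n := Nat.cast_le.mpr (le_trans (le_max_left _ _) hn)
    have hn0 : (0:ℝ) ≤ n := Nat.cast_nonneg n
    set m := ⌈α * n⌉₊ with hm
    have hmj : m ≤ j := Nat.ceil_le.mpr hj1
    have hmn : m ≤ n := Nat.ceil_le.mpr (by nlinarith)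
    have hmjk : m + j ≤ k * n := by
      have h1 : (m : ℝ) < α * n + 1 := Nat.ceil_lt_add_one (by positivity)
      have h2 : ((m + j : ℕ) : ℝ) < ((k * n + 1 : ℕ) : ℝ) := by
        push_cast
        nlinarith
      have h3 : m + j < k * n + 1 := by exact_mod_cast h2
      omega
    -- natural number chain
    have hchain : m ^ (k-1) ≤ (k-1).factorial * (k.factorial * rho n k j + k * k * (n+1) ^ (k-2)) := by
      calc m ^ (k-1) ≤ (k-1).factorial * Ncnt k n m := Ncnt_pow_le hk1 hmn
      _ ≤ (k-1).factorial * Ncnt k n j :=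
          Nat.mul_le_mul_left _ (Ncnt_mono k n m j hmj hmjk)
      _ ≤ _ := Nat.mul_le_mul_left _ (Ncnt_le_rho k n j)
    have B : ((m:ℝ)) ^ (k-1) ≤ ((k-1).factorial : ℝ) * ((k.factorial : ℝ) * (rho n k j : ℝ))
        + ((k-1).factorial : ℝ) * ((k:ℝ) * k) * ((n:ℝ)+1) ^ (k-2) := by
      have := (Nat.cast_le (α := ℝ)).mpr hchain
      push_cast at this
      nlinarith [this]
    have A : (α * n) ^ (k-1) ≤ ((m:ℝ)) ^ (k-1) :=
      pow_le_pow_left₀ (by positivity) (Nat.le_ceil _) _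
    have E : ((k-1).factorial : ℝ) * ((k:ℝ) * k) * ((n:ℝ)+1) ^ (k-2) ≤ ε * (α * n) ^ (k-1) := by
      have h21 : ((n:ℝ)+1) ^ (k-2) ≤ 2 ^ (k-2) * (n:ℝ) ^ (k-2) := by
        rw [← mul_pow]
        refine pow_le_pow_left₀ (by positivity) ?_ _
        have : (1:ℝ) ≤ n := by exact_mod_cast hn1
        linarith
      have hCn : C ≤ ε * α ^ (k-1) * n := by
        have hp : (0:ℝ) ≤ ε * α ^ (k-1) := by positivity
        have h5 : (N0:ℝ) * (ε * α ^ (k-1)) ≤ (n:ℝ) * (ε * α ^ (k-1)) :=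
          mul_le_mul_of_nonneg_right hnN0 hp
        rw [div_le_iff₀ (by positivity)] at hN0
        nlinarith [hN0, h5]
      have hfpos : (0:ℝ) ≤ ((k-1).factorial : ℝ) * ((k:ℝ) * k) := by positivity
      have step1 : ((k-1).factorial : ℝ) * ((k:ℝ) * k) * ((n:ℝ)+1) ^ (k-2)
          ≤ C * (n:ℝ) ^ (k-2) := by
        calc ((k-1).factorial : ℝ) * ((k:ℝ) * k) * ((n:ℝ)+1) ^ (k-2)
            ≤ ((k-1).factorial : ℝ) * ((k:ℝ) * k) * (2 ^ (k-2) * (n:ℝ) ^ (k-2)) :=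
              mul_le_mul_of_nonneg_left h21 hfpos
        _ = C * (n:ℝ) ^ (k-2) := by rw [hC]; ring
      have hnpow : (0:ℝ) ≤ (n:ℝ) ^ (k-2) := by positivity
      calc ((k-1).factorial : ℝ) * ((k:ℝ) * k) * ((n:ℝ)+1) ^ (k-2)
          ≤ C * (n:ℝ) ^ (k-2) := step1
      _ ≤ (ε * α ^ (k-1) * n) * (n:ℝ) ^ (k-2) := mul_le_mul_of_nonneg_right hCn hnpow
      _ = ε * (α ^ (k-1) * (n:ℝ) ^ (k-1)) := by
          rw [show k - 1 = (k-2) + 1 by omega]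
          ring
      _ = ε * (α * n) ^ (k-1) := by rw [mul_pow]
    have hfac : (0:ℝ) < (k.factorial : ℝ) * ((k-1).factorial : ℝ) := by
      have := Nat.factorial_pos k
      have := Nat.factorial_pos (k-1)
      positivity
    rw [div_le_iff₀ hfac]
    have expand : (1 - ε) * (α * n) ^ (k-1) = (α * n) ^ (k-1) - ε * (α * n) ^ (k-1) := by ring
    rw [expand]
    linarith [A, B, E]
  · intro n j
    have := rho_le_pow k n j hk1
    have h2 := (Nat.cast_le (α := ℝ)).mpr this
    push_cast at h2
    exact h2
end
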